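/- arXiv:2108.00031 — 5 statements merged into one kernel-verified Lean document; each statement's English description precedes it below -/
import Mathlib

section
/- Every tensor ψ ∈ (ℂ^d)^{⊗N} admits a representation as a matrix product state with open boundary conditions where the bond dimension m_i at each cut i equals the rank of ψ viewed as a d^i × d^{N-i} matrix. Consequently, the set of MPS with bond dimensions {m_i} coincides exactly with the set of tensors whose Schmidt ranks satisfy rank_i(ψ) ≤ m_i for all i. -/
/-- Partial matrix products of an open-boundary MPS: `mpsProd m d A n σ` is the ordered
product `A_0^{σ_0} A_1^{σ_1} ⋯ A_{n-1}^{σ_{n-1}}`, a matrix of size `m 0 × m n`. -/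
noncomputable def mpsProd (m : ℕ → ℕ) (d : ℕ)
    (A : ∀ i : ℕ, Fin d → Matrix (Fin (m i)) (Fin (m (i + 1))) ℂ) :
    ∀ n : ℕ, (Fin n → Fin d) → Matrix (Fin (m 0)) (Fin (m n)) ℂ
  | 0, _ => 1
  | n + 1, σ => mpsProd m d A n (fun i => σ i.castSucc) * A n (σ (Fin.last n))

/-- The coefficient of the MPS: for `m 0 = m N = 1` the product matrix is `1 × 1` and the
sum of its entries is the scalar `A_0^{σ_0} ⋯ A_{N-1}^{σ_{N-1}}`. -/
noncomputable def mpsCoeff (m : ℕ → ℕ) (d : ℕ)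
    (A : ∀ i : ℕ, Fin d → Matrix (Fin (m i)) (Fin (m (i + 1))) ℂ)
    (N : ℕ) (σ : Fin N → Fin d) : ℂ :=
  ∑ p, ∑ q, mpsProd m d A N σ p q

/-- The tensor `ψ ∈ (ℂ^d)^{⊗N}` reshaped as a `d^i × d^{N-i}` matrix across the cut
between sites `i` and `i+1`. -/
noncomputable def cutMatrix (N d i : ℕ) (hi : i ≤ N) (ψ : (Fin N → Fin d) → ℂ) :
    Matrix (Fin i → Fin d) (Fin (N - i) → Fin d) ℂ :=
  Matrix.of fun σA σB => ψ fun j => Fin.append σA σB (Fin.cast (by omega) j)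


namespace MPS
open Finset Submodule Set Module

variable {N d : ℕ}

/-- Plain cut function. -/
def cm (N d : ℕ) (ψ : (Fin N → Fin d) → ℂ) (i : ℕ) :
    (Fin i → Fin d) → (Fin (N - i) → Fin d) → ℂ :=
  fun σA τ => ψ fun j => if h : j.1 < i then σA ⟨j.1, h⟩ else
    τ ⟨j.1 - i, by have := j.isLt; omega⟩

lemma cutMatrix_eq {i : ℕ} (hi : i ≤ N) (ψ : (Fin N → Fin d) → ℂ) :
    cutMatrix N d i hi ψ = Matrix.of (cm N d ψ i) := by
  ext σA τ
  simp only [cutMatrix, Matrix.of_apply, cm]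
  congr 1
  funext j
  simp only [Fin.append, Fin.addCases, Fin.cast, Fin.castLT]
  split
  · rfl
  · congr 1
    simp [Fin.subNat]

/-- Contraction fixing the first remaining site to `σ`. -/
def ctrL (N d : ℕ) (i : ℕ) (σ : Fin d) :
    ((Fin (N - i) → Fin d) → ℂ) →ₗ[ℂ] ((Fin (N - (i + 1)) → Fin d) → ℂ) where
  toFun v := fun τ => v fun j => if h : j.1 = 0 then σ else
    τ ⟨j.1 - 1, by have := j.isLt; omega⟩
  map_add' _ _ := rfl
  map_smul' _ _ := rfl

lemma ctr_cm (ψ : (Fin N → Fin d) → ℂ) (n : ℕ) (σ : Fin (n + 1) → Fin d) :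
    ctrL N d n (σ (Fin.last n)) (cm N d ψ n (fun i => σ i.castSucc)) =
      cm N d ψ (n + 1) σ := by
  funext τ
  simp only [ctrL, LinearMap.coe_mk, AddHom.coe_mk, cm]
  congr 1
  funext j
  rcases Nat.lt_trichotomy j.1 n with h1 | h1 | h1
  · rw [dif_pos h1, dif_pos (by omega : j.1 < n + 1)]
    exact congrArg σ (Fin.ext rfl)
  · rw [dif_neg (by omega), dif_pos (by omega : j.1 - n = 0),
      dif_pos (by omega : j.1 < n + 1)]
    exact congrArg σ (Fin.ext (by simp [Fin.last, h1]))
  · rw [dif_neg (by omega), dif_neg (by omega : ¬ j.1 - n = 0),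
      dif_neg (by omega : ¬ j.1 < n + 1)]
    exact congrArg τ (Fin.ext (by simp; omega))

lemma ctr_cm_row (ψ : (Fin N → Fin d) → ℂ) (i : ℕ) (σA : Fin i → Fin d) (σ : Fin d) :
    ctrL N d i σ (cm N d ψ i σA) =
      cm N d ψ (i + 1) (fun j => if h : j.1 < i then σA ⟨j.1, h⟩ else σ) := by
  have h := ctr_cm ψ i (fun j : Fin (i + 1) => if h : j.1 < i then σA ⟨j.1, h⟩ else σ)
  have h1 : (if h : ((Fin.last i : Fin (i + 1)).1 : ℕ) < i then σA ⟨(Fin.last i).1, h⟩ else σ)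
      = σ := by rw [dif_neg (by simp [Fin.last])]
  have h2 : (fun k : Fin i => if h : ((k.castSucc : Fin (i + 1)).1 : ℕ) < i
      then σA ⟨(k.castSucc).1, h⟩ else σ) = σA := by
    funext k
    rw [dif_pos (by simpa using k.2)]
    exact congrArg σA (Fin.ext rfl)
  rw [h1, h2] at h
  exact h

noncomputable def Rsp (N d : ℕ) (ψ : (Fin N → Fin d) → ℂ) (i : ℕ) :
    Submodule ℂ ((Fin (N - i) → Fin d) → ℂ) :=
  Submodule.span ℂ (Set.range (cm N d ψ i))

lemma ctr_maps (ψ : (Fin N → Fin d) → ℂ) (i : ℕ) (σ : Fin d) :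
    Submodule.map (ctrL N d i σ) (Rsp N d ψ i) ≤ Rsp N d ψ (i + 1) := by
  rw [Rsp, Submodule.map_span, Submodule.span_le]
  rintro _ ⟨_, ⟨σA, rfl⟩, rfl⟩
  exact Submodule.subset_span ⟨_, (ctr_cm_row ψ i σA σ).symm⟩

lemma rank_cm (ψ : (Fin N → Fin d) → ℂ) (i : ℕ) :
    (Matrix.of (cm N d ψ i)).rank = finrank ℂ (Rsp N d ψ i) :=
  Matrix.rank_eq_finrank_span_row _

noncomputable def bd (N d : ℕ) (ψ : (Fin N → Fin d) → ℂ) : ℕ → ℕ := fun i =>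
  if _ : 0 < i ∧ i < N then (Matrix.of (cm N d ψ i)).rank else 1

lemma bd_zero (ψ : (Fin N → Fin d) → ℂ) : bd N d ψ 0 = 1 := by simp [bd]

lemma bd_last (ψ : (Fin N → Fin d) → ℂ) : bd N d ψ N = 1 := by simp [bd]

noncomputable def basisE (ψ : (Fin N → Fin d) → ℂ) (i : ℕ) (h : 0 < i ∧ i < N) :
    Basis (Fin (bd N d ψ i)) ℂ (Rsp N d ψ i) :=
  Module.finBasisOfFinrankEq ℂ _ (by rw [bd, dif_pos h, rank_cm])

noncomputable def eV (ψ : (Fin N → Fin d) → ℂ) :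
    ∀ i, Fin (bd N d ψ i) → ((Fin (N - i) → Fin d) → ℂ) :=
  fun i => if h : 0 < i ∧ i < N then (fun p => (basisE ψ i h p : _)) else
    (if h0 : i = 0 then (fun _ => cm N d ψ i (fun j => absurd j.2 (by omega))) else
     (fun _ _ => 1))

lemma eV_mem (ψ : (Fin N → Fin d) → ℂ) (i : ℕ) (hi : i < N) (p : Fin (bd N d ψ i)) :
    eV ψ i p ∈ Rsp N d ψ i := by
  rcases Nat.eq_zero_or_pos i with h0 | h0
  · subst h0
    rw [eV, dif_neg (by simp), dif_pos rfl]
    exact Submodule.subset_span ⟨_, rfl⟩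
  · rw [eV, dif_pos ⟨h0, hi⟩]
    exact (basisE ψ i ⟨h0, hi⟩ p).2

lemma eV_span (ψ : (Fin N → Fin d) → ℂ) (i : ℕ) (h0 : 0 < i) (hi : i ≤ N) :
    Rsp N d ψ i ≤ Submodule.span ℂ (Set.range (eV ψ i)) := by
  rcases lt_or_eq_of_le hi with hlt | heq
  · intro v hv
    rw [eV, dif_pos ⟨h0, hlt⟩]
    have hr : Set.range (fun p =>
        ((basisE ψ i ⟨h0, hlt⟩ p : Rsp N d ψ i) : (Fin (N - i) → Fin d) → ℂ)) =
        (Rsp N d ψ i).subtype '' (Set.range (basisE ψ i ⟨h0, hlt⟩)) := by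
      rw [← Set.range_comp]; rfl
    rw [hr, Submodule.span_image, Basis.span_eq, Submodule.map_subtype_top]
    exact hv
  · intro v _
    have p0 : Fin (bd N d ψ i) := ⟨0, by rw [bd, dif_neg (by omega)]; omega⟩
    have hτ : ∀ τ τ' : Fin (N - i) → Fin d, τ = τ' := fun τ τ' =>
      funext fun j => absurd j.2 (by omega)
    have heV : eV ψ i p0 = fun _ => 1 := by
      rw [eV, dif_neg (by omega), dif_neg (by omega)]
    have τ0 : Fin (N - i) → Fin d := fun j => absurd j.2 (by omega)
    have hv : v = v τ0 • eV ψ i p0 := by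
      funext τ
      rw [heV]
      show v τ = v τ0 * 1
      rw [mul_one]
      exact congrArg v (hτ _ _)
    rw [hv]
    exact Submodule.smul_mem _ _ (Submodule.subset_span ⟨p0, rfl⟩)

lemma hA (ψ : (Fin N → Fin d) → ℂ) (i : ℕ) (hi : i + 1 ≤ N) (p : Fin (bd N d ψ i))
    (σ : Fin d) :
    ctrL N d i σ (eV ψ i p) ∈ Submodule.span ℂ (Set.range (eV ψ (i + 1))) :=
  eV_span ψ (i + 1) (by omega) hi (ctr_maps ψ i σ ⟨_, eV_mem ψ i (by omega) p, rfl⟩)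

noncomputable def Amat (ψ : (Fin N → Fin d) → ℂ) :
    ∀ i : ℕ, Fin d → Matrix (Fin (bd N d ψ i)) (Fin (bd N d ψ (i + 1))) ℂ :=
  fun i => if hi : i + 1 ≤ N then
    (fun σ => Matrix.of fun p q =>
      (mem_span_range_iff_exists_fun ℂ |>.mp (hA ψ i hi p σ)).choose q)
  else fun _ => 0

lemma Amat_spec (ψ : (Fin N → Fin d) → ℂ) (i : ℕ) (hi : i + 1 ≤ N) (σ : Fin d)
    (p : Fin (bd N d ψ i)) :
    ∑ q, Amat ψ i σ p q • eV ψ (i + 1) q = ctrL N d i σ (eV ψ i p) := by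
  simp only [Amat, dif_pos hi, Matrix.of_apply]
  exact (mem_span_range_iff_exists_fun ℂ |>.mp (hA ψ i hi p σ)).choose_spec

lemma main_rep (ψ : (Fin N → Fin d) → ℂ) :
    ∀ n, n ≤ N → ∀ σ : Fin n → Fin d,
      cm N d ψ n σ =
        ∑ q, (∑ p, mpsProd (bd N d ψ) d (Amat ψ) n σ p q) • eV ψ n q := by
  intro n
  induction n with
  | zero =>
    intro _ σ
    have hs : ∀ q : Fin (bd N d ψ 0),
        (∑ p, mpsProd (bd N d ψ) d (Amat ψ) 0 σ p q) = 1 := by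
      intro q
      simp [mpsProd, Matrix.one_apply]
    simp only [hs, one_smul]
    have he : ∀ q : Fin (bd N d ψ 0),
        eV ψ 0 q = cm N d ψ 0 σ := by
      intro q
      rw [eV, dif_neg (by simp), dif_pos rfl]
      exact congrArg (cm N d ψ 0) (funext fun j => absurd j.2 (by omega))
    simp only [he]
    rw [Finset.sum_const, Finset.card_univ, Fintype.card_fin, bd_zero, one_smul]
  | succ n ih =>
    intro hn σ
    have hfront := ih (by omega) (fun k => σ k.castSucc)
    have key := congrArg (ctrL N d n (σ (Fin.last n))) hfront
    rw [ctr_cm ψ n σ, map_sum] at key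
    simp only [map_smul] at key
    rw [key]
    have hspec : ∀ q, ctrL N d n (σ (Fin.last n)) (eV ψ n q) =
        ∑ r, Amat ψ n (σ (Fin.last n)) q r • eV ψ (n + 1) r :=
      fun q => (Amat_spec ψ n hn (σ (Fin.last n)) q).symm
    simp only [hspec, Finset.smul_sum, smul_smul]
    rw [Finset.sum_comm]
    congr 1
    funext r
    rw [← Finset.sum_smul]
    congr 1
    have : ∀ q, (∑ p, mpsProd (bd N d ψ) d (Amat ψ) n (fun k => σ k.castSucc) p q) *
        Amat ψ n (σ (Fin.last n)) q r =
        ∑ p, mpsProd (bd N d ψ) d (Amat ψ) n (fun k => σ k.castSucc) p q *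
          Amat ψ n (σ (Fin.last n)) q r := fun q => Finset.sum_mul _ _ _
    simp only [this]
    rw [Finset.sum_comm]
    rfl

lemma part1 (hN : 1 ≤ N) (ψ : (Fin N → Fin d) → ℂ) :
    ∀ σ, ψ σ = mpsCoeff (bd N d ψ) d (Amat ψ) N σ := by
  intro σ
  have τ0 : Fin (N - N) → Fin d := fun j => absurd j.2 (by omega)
  have h := congrFun (main_rep ψ N le_rfl σ) τ0
  have hL : cm N d ψ N σ τ0 = ψ σ := by
    simp only [cm]
    refine congrArg ψ (funext fun j => ?_)
    rw [dif_pos j.2]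
  have hR : ∀ q : Fin (bd N d ψ N), eV ψ N q τ0 = 1 := by
    intro q
    rw [eV, dif_neg (by omega), dif_neg (by omega)]
  rw [hL] at h
  rw [h, Finset.sum_apply]
  simp only [Pi.smul_apply, hR, smul_eq_mul, mul_one]
  rw [mpsCoeff, Finset.sum_comm]

noncomputable def prodFrom (m : ℕ → ℕ)
    (A : ∀ i : ℕ, Fin d → Matrix (Fin (m i)) (Fin (m (i + 1))) ℂ) (i : ℕ) :
    ∀ k : ℕ, (Fin k → Fin d) → Matrix (Fin (m i)) (Fin (m (i + k))) ℂ
  | 0, _ => (1 : Matrix (Fin (m i)) (Fin (m i)) ℂ)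
  | k + 1, τ => prodFrom m A i k (fun j => τ j.castSucc) * A (i + k) (τ (Fin.last k))

lemma mpsProd_split (m : ℕ → ℕ)
    (A : ∀ i : ℕ, Fin d → Matrix (Fin (m i)) (Fin (m (i + 1))) ℂ) (i : ℕ) :
    ∀ k (σ : Fin (i + k) → Fin d),
    mpsProd m d A (i + k) σ =
      mpsProd m d A i (fun j => σ (Fin.castAdd k j)) *
        prodFrom m A i k (fun j => σ (Fin.natAdd i j)) := by
  have prodFrom_zero : ∀ τ, prodFrom m A i 0 τ =
      (1 : Matrix (Fin (m (i + 0))) (Fin (m (i + 0))) ℂ) := fun _ => rfl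
  intro k
  induction k with
  | zero =>
    intro σ
    rw [prodFrom_zero, Matrix.mul_one]
    rfl
  | succ k ih =>
    intro σ
    calc mpsProd m d A (i + (k + 1)) σ
        = mpsProd m d A (i + k) (fun j => σ j.castSucc) *
            A (i + k) (σ (Fin.last (i + k))) := rfl
      _ = (mpsProd m d A i (fun j => σ (Fin.castAdd k j).castSucc) *
            prodFrom m A i k (fun j => σ (Fin.natAdd i j).castSucc)) *
            A (i + k) (σ (Fin.last (i + k))) := by rw [ih]
      _ = mpsProd m d A i (fun j => σ (Fin.castAdd (k + 1) j)) *
          prodFrom m A i (k + 1) (fun j => σ (Fin.natAdd i j)) := by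
          rw [Matrix.mul_assoc]
          rfl

lemma sum_mul_sum_comm {α β γ : Type*} [Fintype α] [Fintype β] [Fintype γ]
    (f : α → γ → ℂ) (g : γ → β → ℂ) :
    ∑ p, ∑ q, (∑ r, f p r * g r q) = ∑ r, (∑ p, f p r) * (∑ q, g r q) := by
  simp only [Finset.sum_mul, Finset.mul_sum]
  calc ∑ p, ∑ q, ∑ r, f p r * g r q
      = ∑ p, ∑ r, ∑ q, f p r * g r q :=
        Finset.sum_congr rfl fun _ _ => Finset.sum_comm
    _ = ∑ r, ∑ p, ∑ q, f p r * g r q := Finset.sum_comm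
    _ = ∑ r, ∑ q, ∑ p, f p r * g r q :=
        Finset.sum_congr rfl fun _ _ => Finset.sum_comm

lemma rank_le_of_mps (m : ℕ → ℕ)
    (A : ∀ i : ℕ, Fin d → Matrix (Fin (m i)) (Fin (m (i + 1))) ℂ)
    (ψ : (Fin N → Fin d) → ℂ) (hψ : ∀ σ, ψ σ = mpsCoeff m d A N σ)
    (i : ℕ) (hi : i ≤ N) : (Matrix.of (cm N d ψ i)).rank ≤ m i := by
  obtain ⟨k, rfl⟩ : ∃ k, N = i + k := ⟨N - i, by omega⟩
  have hfact : Matrix.of (cm (i + k) d ψ i) =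
      (Matrix.of fun σA r => ∑ p, mpsProd m d A i σA p r :
        Matrix (Fin i → Fin d) (Fin (m i)) ℂ) *
      (Matrix.of fun r σB => ∑ q, prodFrom m A i k
          (fun j => σB ⟨j.1, by omega⟩) r q :
        Matrix (Fin (m i)) (Fin (i + k - i) → Fin d) ℂ) := by
    ext σA σB
    rw [Matrix.mul_apply]
    simp only [Matrix.of_apply, cm]
    rw [hψ, mpsCoeff]
    rw [mpsProd_split m A i k
      (fun j => if h : j.1 < i then σA ⟨j.1, h⟩ else σB ⟨j.1 - i, by have := j.isLt; omega⟩)]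
    have hfront : (fun j : Fin i =>
        (fun j' : Fin (i + k) => if h : j'.1 < i then σA ⟨j'.1, h⟩ else
          σB ⟨j'.1 - i, by have := j'.isLt; omega⟩) (Fin.castAdd k j)) = σA := by
      funext j
      simp only
      rw [dif_pos (show ((Fin.castAdd k j : Fin (i + k)).1 : ℕ) < i from j.2)]
      exact congrArg σA (Fin.ext rfl)
    have hback : (fun j : Fin k =>
        (fun j' : Fin (i + k) => if h : j'.1 < i then σA ⟨j'.1, h⟩ else
          σB ⟨j'.1 - i, by have := j'.isLt; omega⟩) (Fin.natAdd i j)) =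
        (fun j : Fin k => σB ⟨j.1, by omega⟩) := by
      funext j
      simp only
      rw [dif_neg (by simp)]
      exact congrArg σB (Fin.ext (by simp))
    rw [hfront, hback]
    rw [← sum_mul_sum_comm (fun p r => mpsProd m d A i σA p r)
      (fun r q => prodFrom m A i k (fun j => σB ⟨j.1, by omega⟩) r q)]
    exact Finset.sum_congr rfl fun p _ => Finset.sum_congr rfl fun q _ =>
      Matrix.mul_apply
  rw [hfact]
  refine (Matrix.rank_mul_le_left _ _).trans ?_
  have := Matrix.rank_le_card_width
    (Matrix.of fun σA r => ∑ p, mpsProd m d A i σA p r :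
      Matrix (Fin i → Fin d) (Fin (m i)) ℂ)
  simpa using this

noncomputable def padA (m m' : ℕ → ℕ)
    (A' : ∀ i : ℕ, Fin d → Matrix (Fin (m' i)) (Fin (m' (i + 1))) ℂ) :
    ∀ i : ℕ, Fin d → Matrix (Fin (m i)) (Fin (m (i + 1))) ℂ :=
  fun i σ => Matrix.of fun p q =>
    if h : p.1 < m' i ∧ q.1 < m' (i + 1) then A' i σ ⟨p.1, h.1⟩ ⟨q.1, h.2⟩ else 0

lemma pad_prod (m m' : ℕ → ℕ)
    (A' : ∀ i : ℕ, Fin d → Matrix (Fin (m' i)) (Fin (m' (i + 1))) ℂ)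
    (h0 : m' 0 = m 0) :
    ∀ n : ℕ, (∀ j, j ≤ n → m' j ≤ m j) →
      ∀ (σ : Fin n → Fin d) (p : Fin (m 0)) (q : Fin (m n)),
      mpsProd m d (padA m m' A') n σ p q =
        if h : p.1 < m' 0 ∧ q.1 < m' n then
          mpsProd m' d A' n σ ⟨p.1, h.1⟩ ⟨q.1, h.2⟩ else 0 := by
  intro n
  induction n with
  | zero =>
    intro _ σ p q
    rw [dif_pos ⟨(by have := p.2; omega : p.1 < m' 0), (by have := q.2; omega : q.1 < m' 0)⟩]
    rw [show mpsProd m d (padA m m' A') 0 σ = (1 : Matrix (Fin (m 0)) (Fin (m 0)) ℂ) from rfl,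
      show mpsProd m' d A' 0 σ = (1 : Matrix (Fin (m' 0)) (Fin (m' 0)) ℂ) from rfl,
      Matrix.one_apply, Matrix.one_apply]
    simp [Fin.ext_iff]
  | succ n ih =>
    intro hle σ p q
    have ihs := ih (fun j hj => hle j (by omega)) (fun k => σ k.castSucc) p
    rw [show mpsProd m d (padA m m' A') (n + 1) σ =
      mpsProd m d (padA m m' A') n (fun k => σ k.castSucc) *
        padA m m' A' n (σ (Fin.last n)) from rfl, Matrix.mul_apply]
    by_cases hp : p.1 < m' 0
    · by_cases hq : q.1 < m' (n + 1)
      · rw [dif_pos ⟨hp, hq⟩]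
        rw [show mpsProd m' d A' (n + 1) σ =
          mpsProd m' d A' n (fun k => σ k.castSucc) * A' n (σ (Fin.last n)) from rfl,
          Matrix.mul_apply]
        set F : ℕ → ℂ := fun x => if hx : x < m' n then
            mpsProd m' d A' n (fun k => σ k.castSucc) ⟨p.1, hp⟩ ⟨x, hx⟩ *
              A' n (σ (Fin.last n)) ⟨x, hx⟩ ⟨q.1, hq⟩ else 0 with hF
        have hterm : ∀ r : Fin (m n),
            mpsProd m d (padA m m' A') n (fun k => σ k.castSucc) p r *
              padA m m' A' n (σ (Fin.last n)) r q = F r.1 := by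
          intro r
          simp only [hF]
          by_cases hr : r.1 < m' n
          · rw [ihs r, dif_pos ⟨hp, hr⟩, dif_pos hr]
            congr 1
            exact (show padA m m' A' n (σ (Fin.last n)) r q = _ from dif_pos ⟨hr, hq⟩)
          · rw [ihs r, dif_neg (fun hc => hr hc.2), dif_neg hr, zero_mul]
        calc ∑ r, mpsProd m d (padA m m' A') n (fun k => σ k.castSucc) p r *
              padA m m' A' n (σ (Fin.last n)) r q
            = ∑ r : Fin (m n), F r.1 := Finset.sum_congr rfl fun r _ => hterm r
          _ = ∑ x ∈ Finset.range (m n), F x := Fin.sum_univ_eq_sum_range F (m n)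
          _ = ∑ x ∈ Finset.range (m' n), F x :=
              (Finset.sum_subset (Finset.range_subset_range.mpr (hle n (by omega)))
                (fun x _ hx => by simp only [hF]; exact dif_neg (by simpa using hx))).symm
          _ = ∑ r : Fin (m' n), F r.1 := (Fin.sum_univ_eq_sum_range F (m' n)).symm
          _ = ∑ r : Fin (m' n), mpsProd m' d A' n (fun k => σ k.castSucc) ⟨p.1, hp⟩ r *
              A' n (σ (Fin.last n)) r ⟨q.1, hq⟩ := by
              refine Finset.sum_congr rfl fun r _ => ?_
              simp only [hF]
              rw [dif_pos r.2]
      · rw [dif_neg (fun hc => hq hc.2)]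
        refine Finset.sum_eq_zero fun r _ => ?_
        rw [show padA m m' A' n (σ (Fin.last n)) r q = 0 from
          dif_neg (fun hc => hq hc.2), mul_zero]
    · rw [dif_neg (fun hc => hp hc.1)]
      refine Finset.sum_eq_zero fun r _ => ?_
      rw [ihs r, dif_neg (fun hc => hp hc.1), zero_mul]
lemma sum_fin_one {k : ℕ} (hk : k = 1) (f : Fin k → ℂ) :
    (∑ p, f p) = f ⟨0, by omega⟩ := by
  subst hk
  exact Fin.sum_univ_one f

end MPS

/-- (1) Every tensor `ψ ∈ (ℂ^d)^{⊗N}` has an OBC-MPS representation whose bond dimension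
at each cut `i` equals the Schmidt rank of `ψ` across that cut.  (2) Consequently, the
set of MPS with bond dimensions `{m i}` is exactly the set of tensors all of whose
Schmidt ranks satisfy `rank_i ψ ≤ m i`. -/
theorem mps_exact_representation_and_set_eq (N d : ℕ) (hN : 1 ≤ N) :
    (∀ ψ : (Fin N → Fin d) → ℂ,
      ∃ (m : ℕ → ℕ) (A : ∀ i : ℕ, Fin d → Matrix (Fin (m i)) (Fin (m (i + 1))) ℂ),
        m 0 = 1 ∧ m N = 1 ∧
        (∀ i (h1 : 1 ≤ i) (h2 : i ≤ N - 1),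
          m i = (cutMatrix N d i (h2.trans (Nat.sub_le N 1)) ψ).rank) ∧
        (∀ σ, ψ σ = mpsCoeff m d A N σ)) ∧
    (∀ m : ℕ → ℕ, m 0 = 1 → m N = 1 →
      {ψ : (Fin N → Fin d) → ℂ |
          ∃ A : ∀ i : ℕ, Fin d → Matrix (Fin (m i)) (Fin (m (i + 1))) ℂ,
            ∀ σ, ψ σ = mpsCoeff m d A N σ} =
        {ψ : (Fin N → Fin d) → ℂ |
          ∀ i (h1 : 1 ≤ i) (h2 : i ≤ N - 1),
            (cutMatrix N d i (h2.trans (Nat.sub_le N 1)) ψ).rank ≤ m i}) := by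
  constructor
  · intro ψ
    refine ⟨MPS.bd N d ψ, MPS.Amat ψ, MPS.bd_zero ψ, MPS.bd_last ψ, ?_, MPS.part1 hN ψ⟩
    intro i h1 h2
    rw [MPS.cutMatrix_eq (h2.trans (Nat.sub_le N 1)) ψ]
    simp only [MPS.bd]
    rw [dif_pos ⟨by omega, by omega⟩]
  · intro m hm0 hmN
    ext ψ
    simp only [Set.mem_setOf_eq]
    constructor
    · rintro ⟨A, hψ⟩ i h1 h2
      rw [MPS.cutMatrix_eq (h2.trans (Nat.sub_le N 1)) ψ]
      exact MPS.rank_le_of_mps m A ψ hψ i (by omega)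
    · intro hrk
      have hle : ∀ j, j ≤ N → MPS.bd N d ψ j ≤ m j := by
        intro j hj
        rcases Nat.eq_zero_or_pos j with h0 | h0
        · subst h0; rw [MPS.bd_zero, hm0]
        rcases eq_or_lt_of_le hj with hN' | hN'
        · rw [hN', MPS.bd_last, hmN]
        · have hthis := hrk j h0 (by omega)
          rw [MPS.cutMatrix_eq] at hthis
          simp only [MPS.bd]
          rw [dif_pos ⟨h0, hN'⟩]
          exact hthis
      refine ⟨MPS.padA m (MPS.bd N d ψ) (MPS.Amat ψ), ?_⟩
      intro σ
      rw [MPS.part1 hN ψ σ]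
      rw [mpsCoeff, mpsCoeff]
      rw [MPS.sum_fin_one (MPS.bd_zero ψ), MPS.sum_fin_one hm0]
      rw [MPS.sum_fin_one (MPS.bd_last ψ), MPS.sum_fin_one hmN]
      rw [MPS.pad_prod m (MPS.bd N d ψ) (MPS.Amat ψ)
        (by rw [MPS.bd_zero, hm0]) N hle σ _ _]
      rw [dif_pos ⟨by rw [MPS.bd_zero]; omega, by rw [MPS.bd_last]; omega⟩]
end

section
/- The set of normalized MPS with open boundary conditions, oMPS(N, {m_i}, d) = { ψ ∈ (ℂ^d)^{⊗N} : ‖ψ‖ = 1 and ψ has an OBC-MPS representation with bond dimensions ≤ m_i }, is a closed subset of (ℂ^d)^{⊗N}. -/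
open Submodule Module Set

variable {ι J : Type*} [Fintype ι] [Fintype J]

/-- `k < rank M` iff some `k+1` rows are linearly independent. -/
lemma rank_lt_iff_rows (M : Matrix ι J ℂ) (k : ℕ) :
    k < M.rank ↔ ∃ f : Fin (k + 1) → ι, LinearIndependent ℂ (fun s => M (f s)) := by
  constructor
  · intro hk
    rw [Matrix.rank_eq_finrank_span_row] at hk
    change k < finrank ℂ (span ℂ (Set.range M)) at hk
    obtain ⟨b, hb, hspan, hli⟩ := exists_linearIndependent ℂ (Set.range M)
    have hbfin : b.Finite := (Set.finite_range M).subset hb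
    haveI : Fintype b := hbfin.fintype
    have hcard : finrank ℂ (span ℂ b) = Fintype.card b := by
      rw [finrank_span_set_eq_card hli, Set.toFinset_card]
    rw [← hspan, hcard] at hk
    have : Fintype.card (Fin (k + 1)) ≤ Fintype.card b := by simpa using hk
    obtain ⟨g⟩ := Function.Embedding.nonempty_of_card_le this
    have hsel : ∀ s : Fin (k + 1), ∃ i : ι, M i = (g s : J → ℂ) := fun s => (hb (g s).2)
    choose f hf using hsel
    refine ⟨f, ?_⟩
    have : (fun s => M (f s)) = fun s => ((g s : J → ℂ)) := funext fun s => hf s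
    rw [this]
    exact hli.comp g g.injective
  · rintro ⟨f, hf⟩
    rw [Matrix.rank_eq_finrank_span_row]
    change k < finrank ℂ (span ℂ (Set.range M))
    have h1 : finrank ℂ (span ℂ (Set.range fun s => M (f s))) = k + 1 := by
      rw [finrank_span_eq_card hf, Fintype.card_fin]
    have h2 : span ℂ (Set.range fun s => M (f s)) ≤ span ℂ (Set.range M) :=
      span_mono (Set.range_comp_subset_range f M)
    have := Submodule.finrank_mono h2
    omega

lemma isClosed_rank_le (k : ℕ) : IsClosed {M : Matrix ι J ℂ | M.rank ≤ k} := by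
  rw [← isOpen_compl_iff]
  have : {M : Matrix ι J ℂ | M.rank ≤ k}ᶜ =
      ⋃ f : Fin (k + 1) → ι, {M : Matrix ι J ℂ | LinearIndependent ℂ (fun s => M (f s))} := by
    ext M
    simp only [Set.mem_compl_iff, Set.mem_setOf_eq, not_le, Set.mem_iUnion]
    exact rank_lt_iff_rows M k
  rw [this]
  refine isOpen_iUnion fun f => ?_
  have hc : Continuous fun M : Matrix ι J ℂ => fun s : Fin (k + 1) => M (f s) :=
    continuous_pi fun s => continuous_apply (f s)
  exact isOpen_setOf_linearIndependent.preimage hc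

/-- Tail products starting at site `n`. -/
noncomputable def tailProd (m : ℕ → ℕ) (d : ℕ)
    (A : ∀ i : ℕ, Fin d → Matrix (Fin (m i)) (Fin (m (i + 1))) ℂ) (n : ℕ) :
    ∀ k : ℕ, (Fin k → Fin d) → Matrix (Fin (m n)) (Fin (m (n + k))) ℂ
  | 0, _ => (1 : Matrix (Fin (m n)) (Fin (m n)) ℂ)
  | k + 1, σ => tailProd m d A n k (fun i => σ i.castSucc) * A (n + k) (σ (Fin.last k))

lemma mpsProd_cast (m : ℕ → ℕ) (d : ℕ)
    (A : ∀ i : ℕ, Fin d → Matrix (Fin (m i)) (Fin (m (i + 1))) ℂ)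
    {K K' : ℕ} (h : K = K') (σ : Fin K' → Fin d) (p : Fin (m 0)) (q : Fin (m K')) :
    mpsProd m d A K' σ p q =
      mpsProd m d A K (fun j => σ (Fin.cast h j)) p (Fin.cast (congrArg m h.symm) q) := by
  subst h
  have h1 : (fun j => σ (Fin.cast rfl j)) = σ := funext fun j => congrArg σ (Fin.ext rfl)
  have h2 : (Fin.cast (congrArg m rfl) q) = q := Fin.ext rfl
  rw [h1, h2]

lemma mpsProd_split (m : ℕ → ℕ) (d : ℕ)
    (A : ∀ i : ℕ, Fin d → Matrix (Fin (m i)) (Fin (m (i + 1))) ℂ) (n : ℕ) :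
    ∀ (k : ℕ) (σ : Fin (n + k) → Fin d) (p : Fin (m 0)) (q : Fin (m (n + k))),
      mpsProd m d A (n + k) σ p q =
        ∑ s : Fin (m n), mpsProd m d A n (fun j => σ ⟨j, by omega⟩) p s *
          tailProd m d A n k (fun j => σ ⟨n + j, by omega⟩) s q := by
  intro k
  induction k with
  | zero =>
    intro σ p q
    have h1 : ∀ s : Fin (m n), tailProd m d A n 0 (fun j => σ ⟨n + j.1, by omega⟩) s q
        = (1 : Matrix (Fin (m n)) (Fin (m n)) ℂ) s q := fun _ => rfl
    simp only [h1]
    have h2 : (fun j : Fin n => σ ⟨j.1, by omega⟩) = σ := funext fun j => congrArg σ (Fin.ext rfl)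
    rw [h2]
    exact (congrFun (congrFun (Matrix.mul_one (mpsProd m d A n σ)) p) q).symm
  | succ k ih =>
    intro σ p q
    show (mpsProd m d A (n + k) (fun i => σ i.castSucc) * A (n + k) (σ (Fin.last (n + k)))) p q = _
    rw [Matrix.mul_apply]
    have hrw : ∀ t, mpsProd m d A (n + k) (fun i => σ i.castSucc) p t =
        ∑ s : Fin (m n), mpsProd m d A n (fun j => σ ⟨j, by omega⟩) p s *
          tailProd m d A n k (fun j => σ ⟨n + j, by omega⟩) s t := by
      intro t
      rw [ih (fun i => σ i.castSucc) p t]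
      have e1 : (fun j : Fin n => (fun i : Fin (n+k) => σ i.castSucc) ⟨j.1, by omega⟩)
          = fun j : Fin n => σ ⟨j.1, by omega⟩ := funext fun j => congrArg σ (Fin.ext rfl)
      have e2 : (fun j : Fin k => (fun i : Fin (n+k) => σ i.castSucc) ⟨n + j.1, by omega⟩)
          = fun j : Fin k => σ ⟨n + j.1, by omega⟩ := funext fun j => congrArg σ (Fin.ext rfl)
      rw [e1, e2]
    have htail : ∀ s, tailProd m d A n (k + 1) (fun j => σ ⟨n + j.1, by omega⟩) s q
        = ∑ t, tailProd m d A n k (fun j => σ ⟨n + j.1, by omega⟩) s t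
            * A (n + k) (σ (Fin.last (n + k))) t q := by
      intro s
      show (tailProd m d A n k _ * A (n + k) _) s q = _
      rw [Matrix.mul_apply]
      have e3 : (fun i : Fin k => (fun j : Fin (k+1) => σ ⟨n + j.1, by omega⟩) i.castSucc)
          = fun j : Fin k => σ ⟨n + j.1, by omega⟩ := funext fun j => congrArg σ (Fin.ext rfl)
      have e4 : (fun j : Fin (k+1) => σ ⟨n + j.1, by omega⟩) (Fin.last k)
          = σ (Fin.last (n + k)) := congrArg σ (Fin.ext rfl)
      rw [e3, e4]
    simp only [hrw, htail, Finset.sum_mul, Finset.mul_sum, mul_assoc]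
    rw [Finset.sum_comm]

lemma append_val {α : Type*} {m n : ℕ} (u : Fin m → α) (v : Fin n → α) (k : Fin (m + n)) :
    Fin.append u v k = if h : (k : ℕ) < m then u ⟨k, h⟩ else v ⟨(k : ℕ) - m, by omega⟩ := by
  split_ifs with h
  · exact (congrArg (Fin.append u v) (Fin.ext rfl : k = Fin.castAdd n ⟨k, h⟩)).trans
      (Fin.append_left u v ⟨k, h⟩)
  · exact (congrArg (Fin.append u v)
      (Fin.ext (by simp; omega) : k = Fin.natAdd m ⟨(k : ℕ) - m, by omega⟩)).trans
      (Fin.append_right u v _)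

lemma cons_val {α : Type*} {n : ℕ} (x : α) (p : Fin n → α) (k : Fin (n + 1)) :
    (Fin.cons x p : Fin (n+1) → α) k = if h : (k : ℕ) = 0 then x else p ⟨(k : ℕ) - 1, by omega⟩ := by
  induction k using Fin.cases with
  | zero => simp
  | succ j =>
    rw [Fin.cons_succ, dif_neg (by simp)]
    exact (congrArg p (Fin.ext (by simp))).symm

lemma snoc_val {α : Type*} {n : ℕ} (p : Fin n → α) (x : α) (k : Fin (n + 1)) :
    (Fin.snoc p x : Fin (n+1) → α) k = if h : (k : ℕ) < n then p ⟨k, h⟩ else x := by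
  induction k using Fin.lastCases with
  | last => rw [Fin.snoc_last, dif_neg (by simp)]
  | cast j =>
    rw [Fin.snoc_castSucc, dif_pos (by simpa using j.2)]
    exact (congrArg p (Fin.ext (by simp))).symm

def sliceIdx (N d i : ℕ) (a : Fin d) (h : i < N) :
    (Fin (N - (i + 1)) → Fin d) → (Fin (N - i) → Fin d) :=
  fun σB j => (Fin.cons a σB : Fin (N - (i+1) + 1) → Fin d) (Fin.cast (by omega : N - i = (N - (i + 1)) + 1) j)

lemma cut_slice (N d : ℕ) (ψ : (Fin N → Fin d) → ℂ) (i : ℕ) (h : i + 1 ≤ N)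
    (σA : Fin i → Fin d) (a : Fin d) :
    (cutMatrix N d i (by omega) ψ σA) ∘ (sliceIdx N d i a (by omega)) =
      cutMatrix N d (i + 1) h ψ (Fin.snoc σA a) := by
  funext σB
  show ψ _ = ψ _
  congr 1
  funext j
  rw [append_val, append_val]
  simp only [Fin.coe_cast]
  rcases Nat.lt_trichotomy (j : ℕ) i with hj | hj | hj
  · rw [dif_pos hj, dif_pos (by omega), snoc_val, dif_pos (by simp; omega)]
  · rw [dif_neg (by omega), dif_pos (by omega), snoc_val, dif_neg (by simp; omega)]
    show (Fin.cons a σB : Fin (N - (i+1) + 1) → Fin d) _ = a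
    rw [cons_val, dif_pos (by simp; omega)]
  · rw [dif_neg (by omega), dif_neg (by omega)]
    show (Fin.cons a σB : Fin (N - (i+1) + 1) → Fin d) _ = σB _
    rw [cons_val, dif_neg (by simp; omega)]
    exact congrArg σB (Fin.ext (by simp; omega))

lemma rank_cut_le (N d : ℕ) (m' : ℕ → ℕ)
    (A : ∀ i : ℕ, Fin d → Matrix (Fin (m' i)) (Fin (m' (i + 1))) ℂ)
    (ψ : (Fin N → Fin d) → ℂ) (hψ : ∀ σ, ψ σ = mpsCoeff m' d A N σ)
    (i : ℕ) (hi : i ≤ N) : (cutMatrix N d i hi ψ).rank ≤ m' i := by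
  have hNik : N = i + (N - i) := by omega
  set P : Matrix (Fin i → Fin d) (Fin (m' i)) ℂ :=
    Matrix.of fun σA s => ∑ p0, mpsProd m' d A i σA p0 s with hP
  set Q : Matrix (Fin (m' i)) (Fin (N - i) → Fin d) ℂ :=
    Matrix.of fun s σB => ∑ qN : Fin (m' N),
      tailProd m' d A i (N - i) σB s (Fin.cast (congrArg m' hNik) qN) with hQ
  have hfac : cutMatrix N d i hi ψ = P * Q := by
    ext σA σB
    rw [Matrix.mul_apply]
    show ψ (fun j => Fin.append σA σB (Fin.cast (by omega) j)) = _
    rw [hψ]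
    unfold mpsCoeff
    have key : ∀ (p0 : Fin (m' 0)) (qN : Fin (m' N)),
        mpsProd m' d A N (fun j => Fin.append σA σB (Fin.cast (by omega) j)) p0 qN =
        ∑ s : Fin (m' i), mpsProd m' d A i σA p0 s *
          tailProd m' d A i (N - i) σB s (Fin.cast (congrArg m' hNik) qN) := by
      intro p0 qN
      rw [mpsProd_cast m' d A hNik.symm _ p0 qN,
        mpsProd_split m' d A i (N - i) _ p0 _]
      congr 1
      ext s
      congr 1
      · congr 1
        funext j
        rw [append_val]
        simp only [Fin.coe_cast]
        rw [dif_pos j.2]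
      · congr 1
        funext j
        rw [append_val]
        simp only [Fin.coe_cast]
        rw [dif_neg (by omega)]
        exact congrArg σB (Fin.ext (by simp))
    simp only [key]
    have swap1 : ∀ (f : Fin (m' 0) → Fin (m' N) → Fin (m' i) → ℂ),
        ∑ p0, ∑ qN, ∑ s, f p0 qN s = ∑ s, ∑ p0, ∑ qN, f p0 qN s := by
      intro f
      have h1 : ∀ p0 : Fin (m' 0), ∑ qN : Fin (m' N), ∑ s : Fin (m' i), f p0 qN s
          = ∑ s, ∑ qN, f p0 qN s := fun _ => Finset.sum_comm
      simp only [h1]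
      exact Finset.sum_comm
    rw [swap1]
    refine Finset.sum_congr rfl fun s _ => ?_
    show _ = P σA s * Q s σB
    simp only [hP, hQ, Matrix.of_apply, Finset.sum_mul, Finset.mul_sum]
    exact Finset.sum_comm
  rw [hfac]
  calc (P * Q).rank ≤ P.rank := Matrix.rank_mul_le_left P Q
    _ ≤ Fintype.card (Fin (m' i)) := Matrix.rank_le_card_width P
    _ = m' i := Fintype.card_fin _

open Submodule Module

/-- Bond dimensions extracted from a state: ranks of cut matrices (with boundary = 1). -/
noncomputable def bondDim (N d : ℕ) (ψ : (Fin N → Fin d) → ℂ) : ℕ → ℕ := fun i =>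
  if i = 0 ∨ N ≤ i then 1 else (cutMatrix N d (min i N) (min_le_right i N) ψ).rank

lemma bondDim_zero (N d : ℕ) (ψ : (Fin N → Fin d) → ℂ) : bondDim N d ψ 0 = 1 := by
  simp [bondDim]

lemma bondDim_last (N d : ℕ) (ψ : (Fin N → Fin d) → ℂ) : bondDim N d ψ N = 1 := by
  simp [bondDim]

lemma cut_rank_congr (N d : ℕ) (ψ : (Fin N → Fin d) → ℂ) {i i' : ℕ} (h : i = i')
    (hi : i ≤ N) (hi' : i' ≤ N) :
    (cutMatrix N d i hi ψ).rank = (cutMatrix N d i' hi' ψ).rank := by subst h; rfl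

lemma bondDim_mid (N d : ℕ) (ψ : (Fin N → Fin d) → ℂ) (i : ℕ) (h0 : 0 < i) (hi : i < N) :
    bondDim N d ψ i = (cutMatrix N d i hi.le ψ).rank := by
  rw [bondDim, if_neg (by omega)]
  exact cut_rank_congr N d ψ (min_eq_left hi.le) _ _

theorem exists_mps (N d : ℕ) (hN : 1 ≤ N) (ψ : (Fin N → Fin d) → ℂ) (hψ0 : ψ ≠ 0) :
    ∃ A : ∀ i : ℕ, Fin d → Matrix (Fin (bondDim N d ψ i)) (Fin (bondDim N d ψ (i + 1))) ℂ,
      ∀ σ, ψ σ = mpsCoeff (bondDim N d ψ) d A N σ := by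
  set r := bondDim N d ψ with hr
  have hψex : ∃ σ, ψ σ ≠ 0 := by
    by_contra hc
    push_neg at hc
    exact hψ0 (funext fun σ => hc σ)
  -- Choice of row-space "bases" at every cut
  have hE : ∀ (i : ℕ) (h : i ≤ N), ∃ R : Fin (r i) → (Fin (N - i) → Fin d) → ℂ,
      LinearIndependent ℂ R ∧
      (∀ σA, cutMatrix N d i h ψ σA ∈ span ℂ (Set.range R)) ∧
      (i < N → ∀ p, R p ∈ span ℂ (Set.range (cutMatrix N d i h ψ))) := by
    intro i h
    rcases eq_or_ne i 0 with h0 | h0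
    · subst h0
      haveI : Unique (Fin (r 0)) := by rw [hr, bondDim_zero]; infer_instance
      set z : Fin 0 → Fin d := fun j => j.elim0 with hz
      obtain ⟨σ, hσ⟩ := hψex
      have hval : cutMatrix N d 0 h ψ z (fun j => σ ⟨j.1, by omega⟩) = ψ σ := by
        show ψ _ = ψ σ
        congr 1
        funext j
        rw [append_val, dif_neg (by omega)]
        exact congrArg σ (Fin.ext (by simp))
      have hrow0 : cutMatrix N d 0 h ψ z ≠ 0 := by
        intro hc
        rw [hc] at hval
        exact hσ (by simpa using hval.symm)
      refine ⟨fun _ => cutMatrix N d 0 h ψ z, linearIndependent_unique_iff.mpr hrow0, ?_, ?_⟩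
      · intro σA
        have hσA : σA = z := funext fun j => j.elim0
        rw [hσA]
        exact subset_span ⟨default, rfl⟩
      · intro _ p
        exact subset_span ⟨z, rfl⟩
    · rcases h.lt_or_eq with hiN | hiN
      · have hrank : r i = (cutMatrix N d i h ψ).rank := by
          rw [hr]
          exact bondDim_mid N d ψ i (by omega) hiN
        set V := span ℂ (Set.range (cutMatrix N d i h ψ)) with hV
        have hfr : finrank ℂ V = r i := by
          rw [hrank]
          exact (Matrix.rank_eq_finrank_span_row _).symm
        let b : Basis (Fin (r i)) ℂ V := Module.finBasisOfFinrankEq ℂ V hfr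
        have hspanR : span ℂ (Set.range fun p => ((b p : (Fin (N - i) → Fin d) → ℂ))) = V := by
          have hb : (fun p => ((b p : (Fin (N - i) → Fin d) → ℂ))) = V.subtype ∘ b := rfl
          rw [hb, Set.range_comp, ← Submodule.map_span, b.span_eq, Submodule.map_top,
            range_subtype]
        refine ⟨fun p => (b p : (Fin (N - i) → Fin d) → ℂ),
          b.linearIndependent.map' V.subtype (ker_subtype V), ?_, ?_⟩
        · intro σA
          rw [hspanR]
          exact subset_span (Set.mem_range_self σA)
        · intro _ p
          exact (b p).2
      · subst hiN
        haveI : Unique (Fin (r i)) := by rw [hr, bondDim_last]; infer_instance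
        haveI hempty : IsEmpty (Fin (i - i)) := ⟨fun j => absurd j.2 (by omega)⟩
        haveI : Unique (Fin (i - i) → Fin d) := Pi.uniqueOfIsEmpty _
        refine ⟨fun _ _ => (1 : ℂ), linearIndependent_unique_iff.mpr (fun hc =>
          one_ne_zero (congrFun hc default)), ?_, fun hlt => absurd hlt (lt_irrefl i)⟩
        intro σA
        have hfn : cutMatrix i d i h ψ σA
            = (cutMatrix i d i h ψ σA default) • (fun _ : Fin (i - i) → Fin d => (1 : ℂ)) := by
          funext x
          rw [Subsingleton.elim x default]
          simp
        rw [hfn]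
        exact smul_mem _ _ (subset_span ⟨default, rfl⟩)
  choose R hRli hRspan hRself using hE
  -- coefficients of the rows
  have hLex : ∀ (i : ℕ) (h : i ≤ N) (σA : Fin i → Fin d), ∃ c : Fin (r i) → ℂ,
      ∑ p, c p • R i h p = cutMatrix N d i h ψ σA :=
    fun i h σA => (mem_span_range_iff_exists_fun ℂ).mp (hRspan i h σA)
  choose L hL using hLex
  -- transfer matrices
  have hAex : ∀ (i : ℕ) (h : i + 1 ≤ N) (a : Fin d) (p : Fin (r i)),
      ∃ c : Fin (r (i + 1)) → ℂ, ∑ q, c q • R (i + 1) h q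
        = (R i (by omega) p) ∘ (sliceIdx N d i a (by omega)) := by
    intro i h a p
    apply (mem_span_range_iff_exists_fun ℂ).mp
    have h1 : R i (by omega) p ∈ span ℂ (Set.range (cutMatrix N d i (by omega) ψ)) :=
      hRself i (by omega) (by omega) p
    have h2 := Submodule.mem_map_of_mem
      (f := LinearMap.funLeft ℂ ℂ (sliceIdx N d i a (by omega))) h1
    rw [Submodule.map_span] at h2
    have h3 : (LinearMap.funLeft ℂ ℂ (sliceIdx N d i a (by omega))) ''
        (Set.range (cutMatrix N d i (by omega) ψ)) ⊆
        ↑(span ℂ (Set.range (R (i + 1) h))) := by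
      rintro x ⟨y, ⟨σA, rfl⟩, rfl⟩
      show (cutMatrix N d i (by omega) ψ σA) ∘ (sliceIdx N d i a (by omega)) ∈ _
      rw [cut_slice N d ψ i h σA a]
      exact hRspan (i + 1) h (Fin.snoc σA a)
    exact span_le.mpr h3 h2
  choose Amat hAmat using hAex
  let Afull : ∀ i, Fin d → Matrix (Fin (r i)) (Fin (r (i + 1))) ℂ := fun i =>
    if h : i + 1 ≤ N then (fun a => Matrix.of fun p q => Amat i h a p q) else fun _ => 0
  have hAfull : ∀ (i : ℕ) (h : i + 1 ≤ N) (a : Fin d) (p : Fin (r i)) (q : Fin (r (i + 1))),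
      Afull i a p q = Amat i h a p q := by
    intro i h a p q
    simp only [Afull]
    rw [dif_pos h]
    rfl
  -- linking identity
  have hsnoc : ∀ (n : ℕ) (σ : Fin (n + 1) → Fin d),
      σ = Fin.snoc (fun j => σ j.castSucc) (σ (Fin.last n)) := by
    intro n σ
    funext j
    induction j using Fin.lastCases with
    | last => rw [Fin.snoc_last]
    | cast j => rw [Fin.snoc_castSucc]
  have hlink : ∀ (n : ℕ) (h : n + 1 ≤ N) (σ : Fin (n + 1) → Fin d) (q : Fin (r (n + 1))),
      L (n + 1) h σ q = ∑ p, L n (by omega) (fun j => σ j.castSucc) p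
        * Afull n (σ (Fin.last n)) p q := by
    intro n h σ q
    have hnN : n ≤ N := by omega
    set τ : Fin n → Fin d := fun j => σ j.castSucc with hτ
    set a := σ (Fin.last n) with ha
    have e1 : ∑ q', L (n + 1) h σ q' • R (n + 1) h q'
        = ∑ q', (∑ p, L n hnN τ p * Amat n h a p q') • R (n + 1) h q' := by
      rw [hL (n + 1) h σ]
      calc cutMatrix N d (n + 1) h ψ σ
          = cutMatrix N d (n + 1) h ψ (Fin.snoc τ a) := by rw [← hsnoc n σ]
        _ = (cutMatrix N d n (by omega) ψ τ) ∘ (sliceIdx N d n a (by omega)) :=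
            (cut_slice N d ψ n h τ a).symm
        _ = LinearMap.funLeft ℂ ℂ (sliceIdx N d n a (by omega))
              (cutMatrix N d n (by omega) ψ τ) := rfl
        _ = LinearMap.funLeft ℂ ℂ (sliceIdx N d n a (by omega))
              (∑ p, L n hnN τ p • R n hnN p) := by rw [hL n hnN τ]
        _ = ∑ p, L n hnN τ p • ((R n hnN p) ∘ (sliceIdx N d n a (by omega))) := by
            rw [map_sum]
            exact Finset.sum_congr rfl fun p _ => by rw [map_smul]; rfl
        _ = ∑ p, L n hnN τ p • (∑ q', Amat n h a p q' • R (n + 1) h q') := by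
            exact Finset.sum_congr rfl fun p _ => by rw [hAmat n h a p]
        _ = ∑ q', (∑ p, L n hnN τ p * Amat n h a p q') • R (n + 1) h q' := by
            simp only [Finset.smul_sum, smul_smul]
            rw [Finset.sum_comm]
            simp only [Finset.sum_smul]
    have e2 : ∑ q', (L (n + 1) h σ q' - ∑ p, L n hnN τ p * Amat n h a p q')
        • R (n + 1) h q' = 0 := by
      simp only [sub_smul, Finset.sum_sub_distrib]
      rw [e1, sub_self]
    have e3 := Fintype.linearIndependent_iff.mp (hRli (n + 1) h) _ e2 q
    have e4 : L (n + 1) h σ q = ∑ p, L n hnN τ p * Amat n h a p q := by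
      have := sub_eq_zero.mp e3
      exact this
    rw [e4]
    exact Finset.sum_congr rfl fun p _ => by rw [hAfull n h a]
  -- the product formula for the L coefficients
  have hC : ∀ (n : ℕ) (h : n ≤ N) (σ : Fin n → Fin d) (q : Fin (r n)),
      L n h σ q = ∑ p0, L 0 (Nat.zero_le N) (fun j => j.elim0) p0
        * mpsProd r d Afull n σ p0 q := by
    intro n
    induction n with
    | zero =>
      intro h σ q
      have hσ : σ = fun j => j.elim0 := funext fun j => j.elim0
      rw [hσ]
      show L 0 h _ q = ∑ p0, L 0 (Nat.zero_le N) _ p0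
        * (1 : Matrix (Fin (r 0)) (Fin (r 0)) ℂ) p0 q
      simp [Matrix.one_apply, mul_ite, mul_one, mul_zero]
    | succ n ih =>
      intro h σ q
      have hnN : n ≤ N := by omega
      rw [hlink n h σ q]
      simp only [ih hnN]
      have hm : ∀ p0, mpsProd r d Afull (n + 1) σ p0 q
          = ∑ p, mpsProd r d Afull n (fun j => σ j.castSucc) p0 p
            * Afull n (σ (Fin.last n)) p q := by
        intro p0
        show (mpsProd r d Afull n _ * Afull n _) p0 q = _
        rw [Matrix.mul_apply]
      simp only [hm, Finset.mul_sum, Finset.sum_mul]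
      rw [Finset.sum_comm]
      simp only [mul_assoc]
  -- absorb boundary data
  set c : Fin (r 0) → ℂ := L 0 (Nat.zero_le N) (fun j => j.elim0) with hc
  haveI hempty : IsEmpty (Fin (N - N)) := ⟨fun j => absurd j.2 (by omega)⟩
  haveI : Unique (Fin (N - N) → Fin d) := Pi.uniqueOfIsEmpty _
  set w : Fin (r N) → ℂ := fun p => R N le_rfl p default with hw
  let Afin : ∀ i, Fin d → Matrix (Fin (r i)) (Fin (r (i + 1))) ℂ := fun i a =>
    Matrix.of fun p q =>
      (if h0 : i = 0 then ∑ p', c p' * Afull i a (Fin.cast (congrArg r h0.symm) p') q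
        else Afull i a p q) *
      (if h' : i + 1 = N then w (Fin.cast (congrArg r h') q) else 1)
  have hAfin : ∀ i a p q, Afin i a p q =
      (if h0 : i = 0 then ∑ p', c p' * Afull i a (Fin.cast (congrArg r h0.symm) p') q
        else Afull i a p q) *
      (if h' : i + 1 = N then w (Fin.cast (congrArg r h') q) else 1) := fun i a p q => rfl
  -- product formula for the absorbed matrices
  have hD : ∀ (n : ℕ), 1 ≤ n → n ≤ N → ∀ (σ : Fin n → Fin d) (p0 : Fin (r 0)) (q : Fin (r n)),
      mpsProd r d Afin n σ p0 q = (∑ p', c p' * mpsProd r d Afull n σ p' q) *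
        (if h' : n = N then w (Fin.cast (congrArg r h') q) else 1) := by
    intro n
    induction n with
    | zero => intro h1; exact absurd h1 (by omega)
    | succ n ih =>
      intro _ hle σ p0 q
      rcases Nat.eq_zero_or_pos n with hn0 | hn0
      · subst hn0
        show (mpsProd r d Afin 0 _ * Afin 0 (σ (Fin.last 0))) p0 q = _
        rw [Matrix.mul_apply]
        have h1 : ∀ t, mpsProd r d Afin 0 (fun i => σ i.castSucc) p0 t
            = (1 : Matrix (Fin (r 0)) (Fin (r 0)) ℂ) p0 t := fun _ => rfl
        simp only [h1, Matrix.one_apply, ite_mul, one_mul, zero_mul]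
        rw [Finset.sum_ite_eq]
        simp only [Finset.mem_univ, if_true]
        rw [hAfin 0 (σ (Fin.last 0)) p0 q, dif_pos rfl]
        have hcast0 : ∀ p' : Fin (r 0), (Fin.cast (congrArg r (rfl : (0:ℕ) = 0).symm) p') = p' :=
          fun p' => Fin.ext rfl
        simp only [hcast0]
        have h2 : ∀ p', mpsProd r d Afull 1 σ p' q = Afull 0 (σ (Fin.last 0)) p' q := by
          intro p'
          show (mpsProd r d Afull 0 _ * Afull 0 _) p' q = _
          rw [Matrix.mul_apply]
          have h3 : ∀ t, mpsProd r d Afull 0 (fun i => σ i.castSucc) p' t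
              = (1 : Matrix (Fin (r 0)) (Fin (r 0)) ℂ) p' t := fun _ => rfl
          simp only [h3, Matrix.one_apply, ite_mul, one_mul, zero_mul]
          rw [Finset.sum_ite_eq]
          simp only [Finset.mem_univ, if_true]
        simp only [h2]
      · show (mpsProd r d Afin n _ * Afin n (σ (Fin.last n))) p0 q = _
        rw [Matrix.mul_apply]
        have hih := ih hn0 (by omega) (fun j => σ j.castSucc) p0
        simp only [hih]
        have hd1 : ∀ t : Fin (r n),
            (if h' : n = N then w (Fin.cast (congrArg r h') t) else 1) = 1 :=
          fun _ => dif_neg (by omega)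
        simp only [hd1, mul_one]
        have hd2 : ∀ t, Afin n (σ (Fin.last n)) t q = Afull n (σ (Fin.last n)) t q *
            (if h' : n + 1 = N then w (Fin.cast (congrArg r h') q) else 1) := by
          intro t
          rw [hAfin, dif_neg (by omega)]
        simp only [hd2]
        have hm : ∀ p', mpsProd r d Afull (n + 1) σ p' q
            = ∑ t, mpsProd r d Afull n (fun j => σ j.castSucc) p' t
              * Afull n (σ (Fin.last n)) t q := by
          intro p'
          show (mpsProd r d Afull n _ * Afull n _) p' q = _
          rw [Matrix.mul_apply]
        simp only [hm, Finset.mul_sum, Finset.sum_mul, mul_assoc]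
        rw [Finset.sum_comm]
  -- conclusion
  refine ⟨Afin, fun σ => ?_⟩
  have hcut : cutMatrix N d N le_rfl ψ σ default = ψ σ := by
    show ψ _ = ψ σ
    congr 1
    funext j
    rw [append_val, dif_pos (by simpa using j.2)]
    exact congrArg σ (Fin.ext (by simp))
  have h1 : ψ σ = ∑ p, L N le_rfl σ p * w p := by
    calc ψ σ = cutMatrix N d N le_rfl ψ σ default := hcut.symm
      _ = (∑ p, L N le_rfl σ p • R N le_rfl p) default := by rw [hL N le_rfl σ]
      _ = ∑ p, L N le_rfl σ p * w p := by
          rw [Finset.sum_apply]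
          exact Finset.sum_congr rfl fun p _ => rfl
  show ψ σ = ∑ p0, ∑ q, mpsProd r d Afin N σ p0 q
  have hDq : ∀ (p0 : Fin (r 0)) (q : Fin (r N)), mpsProd r d Afin N σ p0 q
      = (∑ p', c p' * mpsProd r d Afull N σ p' q) * w q := by
    intro p0 q
    rw [hD N hN le_rfl σ p0 q, dif_pos rfl]
    congr 1
  simp only [hDq]
  rw [Finset.sum_const, Finset.card_univ, Fintype.card_fin]
  have hr01 : r 0 = 1 := by rw [hr]; exact bondDim_zero N d ψ
  have hsm : ∀ z : ℂ, r 0 • z = z := by intro z; rw [hr01, one_smul]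
  rw [hsm]
  rw [h1]
  exact Finset.sum_congr rfl fun q _ => by rw [hC N le_rfl σ q]

/-- The set `oMPS(N, {m_i}, d)` of normalized states admitting an OBC-MPS representation
with bond dimensions at most `m i` is a closed subset of `(ℂ^d)^{⊗N}`. -/
theorem oMPS_isClosed (N d : ℕ) (hN : 1 ≤ N) (m : ℕ → ℕ)
    (hm0 : m 0 = 1) (hmN : m N = 1) :
    IsClosed {ψ : (Fin N → Fin d) → ℂ |
      (∑ σ : Fin N → Fin d, ‖ψ σ‖ ^ 2) = 1 ∧
      ∃ (m' : ℕ → ℕ) (A : ∀ i : ℕ, Fin d → Matrix (Fin (m' i)) (Fin (m' (i + 1))) ℂ),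
        m' 0 = 1 ∧ m' N = 1 ∧ (∀ i, i ≤ N → m' i ≤ m i) ∧
        ∀ σ, ψ σ = mpsCoeff m' d A N σ} := by
  classical
  have hset : {ψ : (Fin N → Fin d) → ℂ |
      (∑ σ : Fin N → Fin d, ‖ψ σ‖ ^ 2) = 1 ∧
      ∃ (m' : ℕ → ℕ) (A : ∀ i : ℕ, Fin d → Matrix (Fin (m' i)) (Fin (m' (i + 1))) ℂ),
        m' 0 = 1 ∧ m' N = 1 ∧ (∀ i, i ≤ N → m' i ≤ m i) ∧
        ∀ σ, ψ σ = mpsCoeff m' d A N σ}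
      = {ψ : (Fin N → Fin d) → ℂ | (∑ σ : Fin N → Fin d, ‖ψ σ‖ ^ 2) = 1} ∩
        ⋂ i : Fin (N + 1),
          {ψ : (Fin N → Fin d) → ℂ | (cutMatrix N d i (by omega) ψ).rank ≤ m i} := by
    ext ψ
    simp only [Set.mem_setOf_eq, Set.mem_inter_iff, Set.mem_iInter]
    constructor
    · rintro ⟨hnorm, m', A, hm'0, hm'N, hm'le, hrep⟩
      refine ⟨hnorm, fun i => ?_⟩
      exact le_trans (rank_cut_le N d m' A ψ hrep i (by omega)) (hm'le i (by omega))
    · rintro ⟨hnorm, hranks⟩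
      have hψ0 : ψ ≠ 0 := by
        intro h0
        rw [h0] at hnorm
        simp at hnorm
      obtain ⟨A, hA⟩ := exists_mps N d hN ψ hψ0
      refine ⟨hnorm, bondDim N d ψ, A, bondDim_zero N d ψ, bondDim_last N d ψ, ?_, hA⟩
      intro i hi
      rcases eq_or_ne i 0 with h0 | h0
      · subst h0; rw [bondDim_zero, hm0]
      rcases eq_or_ne i N with hiN | hiN
      · subst hiN; rw [bondDim_last, hmN]
      have hilt : i < N := by omega
      rw [bondDim_mid N d ψ i (by omega) hilt]
      exact hranks ⟨i, by omega⟩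
  rw [hset]
  refine IsClosed.inter ?_ (isClosed_iInter fun i => ?_)
  · have hf : Continuous fun ψ : (Fin N → Fin d) → ℂ => ∑ σ, ‖ψ σ‖ ^ 2 :=
      continuous_finset_sum _ fun σ _ => ((continuous_apply σ).norm.pow 2)
    exact isClosed_eq hf continuous_const
  · have hcut : Continuous fun ψ : (Fin N → Fin d) → ℂ =>
        cutMatrix N d i (by omega) ψ :=
      continuous_matrix fun σA σB => continuous_apply _
    exact (isClosed_rank_le (m i)).preimage hcut
end

section
/- Every OBC-MPS can be brought to right-canonical form: given tensors A_i defining a normalized MPS ψ, there exist tensors B_i with B_i^σ ∈ Matrix(m̃_{i-1}, m̃_i, ℂ), m̃_i ≤ m_i, satisfying Σ_σ B_i^σ (B_i^σ)† = 1 for all i, such that ψ(σ_1,...,σ_N) = B_1^{σ_1}⋯B_N^{σ_N}. -/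
open scoped Matrix

/-- LQ decomposition: any matrix factors as L * Q with Q having orthonormal rows. -/
lemma lq_decomp {a : ℕ} {β : Type} [Fintype β] [DecidableEq β] (M : Matrix (Fin a) β ℂ) :
    ∃ (r : ℕ) (L : Matrix (Fin a) (Fin r) ℂ) (Q : Matrix (Fin r) β ℂ),
      r ≤ a ∧ Q * Qᴴ = 1 ∧ M = L * Q := by
  classical
  set V := EuclideanSpace ℂ β
  set f : Fin a → V := fun p => WithLp.toLp 2 (fun j => M p j : β → ℂ) with hf
  set W : Submodule ℂ V := Submodule.span ℂ (Set.range f) with hW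
  have hr : Module.finrank ℂ W ≤ a := by
    have := finrank_range_le_card (R := ℂ) f
    simpa [Set.finrank] using this
  set b := stdOrthonormalBasis ℂ W
  refine ⟨Module.finrank ℂ W,
    Matrix.of (fun p i => b.repr ⟨f p, Submodule.subset_span ⟨p, rfl⟩⟩ i),
    Matrix.of (fun i j => ((b i : W) : V) j), hr, ?_, ?_⟩
  · ext i k
    have horth := orthonormal_iff_ite.mp b.orthonormal k i
    rw [Submodule.coe_inner, PiLp.inner_apply] at horth
    simp_rw [RCLike.inner_apply] at horth
    simp only [Matrix.mul_apply, Matrix.conjTranspose_apply, Matrix.one_apply, Matrix.of_apply]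
    rw [show (∑ j, ((b i : W) : V) j * star (((b k : W) : V) j))
        = ∑ j, (starRingEnd ℂ) (((b k : W) : V) j) * ((b i : W) : V) j from
      Finset.sum_congr rfl fun j _ => by ring_nf; rfl]
    rw [show (∑ j, (starRingEnd ℂ) (((b k : W) : V) j) * ((b i : W) : V) j)
        = ∑ j, ((b i : W) : V) j * (starRingEnd ℂ) (((b k : W) : V) j) from
      Finset.sum_congr rfl fun j _ => mul_comm _ _, horth]
    by_cases h : i = k <;> simp [h, eq_comm]
  · ext p j
    have hx := b.sum_repr ⟨f p, Submodule.subset_span ⟨p, rfl⟩⟩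
    have hx' := congrArg (Subtype.val) hx
    rw [Submodule.coe_sum] at hx'
    simp only [Submodule.coe_smul] at hx'
    have h2 := congrArg (fun v : V => v j) hx'.symm
    rw [show ((∑ x, b.repr ⟨f p, Submodule.subset_span ⟨p, rfl⟩⟩ x • ((b x : W) : V)) j)
        = ∑ x, (b.repr ⟨f p, Submodule.subset_span ⟨p, rfl⟩⟩ x • ((b x : W) : V)) j from
      by rw [WithLp.ofLp_sum, Finset.sum_apply]] at h2
    simpa [Matrix.mul_apply, f, smul_eq_mul] using h2.trans (Finset.sum_congr rfl fun x _ =>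
      (rfl : _ = b.repr ⟨f p, Submodule.subset_span ⟨p, rfl⟩⟩ x * ((b x : W) : V) j))

/-- Products with an infinite configuration string. -/
noncomputable def Pm (m : ℕ → ℕ) (d : ℕ)
    (A : ∀ i : ℕ, Fin d → Matrix (Fin (m i)) (Fin (m (i + 1))) ℂ) :
    ∀ n : ℕ, (ℕ → Fin d) → Matrix (Fin (m 0)) (Fin (m n)) ℂ
  | 0, _ => 1
  | n + 1, τ => Pm m d A n τ * A n (τ n)

lemma Pm_peel (m : ℕ → ℕ) (d : ℕ)
    (A : ∀ i : ℕ, Fin d → Matrix (Fin (m i)) (Fin (m (i + 1))) ℂ) :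
    ∀ (n : ℕ) (τ : ℕ → Fin d),
      Pm m d A (n + 1) τ
        = A 0 (τ 0) * Pm (fun i => m (i + 1)) d (fun i => A (i + 1)) n (fun i => τ (i + 1))
  | 0, τ => by simp [Pm]
  | n + 1, τ => by
    show Pm m d A (n + 1) τ * A (n + 1) (τ (n + 1)) = _
    rw [Pm_peel m d A n τ]
    show _ = A 0 (τ 0) * (Pm (fun i => m (i + 1)) d (fun i => A (i + 1)) n (fun i => τ (i + 1))
      * A (n + 1) (τ (n + 1)))
    rw [Matrix.mul_assoc]

lemma mpsProd_eq_Pm (m : ℕ → ℕ) (d : ℕ)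
    (A : ∀ i : ℕ, Fin d → Matrix (Fin (m i)) (Fin (m (i + 1))) ℂ) :
    ∀ (n : ℕ) (σ : Fin n → Fin d) (τ : ℕ → Fin d), (∀ i : Fin n, τ i = σ i) →
      mpsProd m d A n σ = Pm m d A n τ
  | 0, _, _, _ => rfl
  | n + 1, σ, τ, h => by
    show mpsProd m d A n (fun i => σ i.castSucc) * A n (σ (Fin.last n)) = Pm m d A n τ * A n (τ n)
    rw [mpsProd_eq_Pm m d A n (fun i => σ i.castSucc) τ (fun i => h i.castSucc),
      show τ n = σ (Fin.last n) from h (Fin.last n)]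

lemma mpsProd_snoc (m : ℕ → ℕ) (d : ℕ)
    (A : ∀ i : ℕ, Fin d → Matrix (Fin (m i)) (Fin (m (i + 1))) ℂ)
    (n : ℕ) (σ : Fin n → Fin d) (s : Fin d) :
    mpsProd m d A (n + 1) (Fin.snoc σ s) = mpsProd m d A n σ * A n s := by
  simp only [mpsProd]
  rw [show (fun i => (Fin.snoc σ s : Fin (n+1) → Fin d) i.castSucc) = σ from
    funext fun i => by simp, Fin.snoc_last]

/-- Products of right-isometric tensors resolve the identity. -/
lemma sum_mpsProd_isometry (m : ℕ → ℕ) (d : ℕ)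
    (B : ∀ i : ℕ, Fin d → Matrix (Fin (m i)) (Fin (m (i + 1))) ℂ) :
    ∀ (n : ℕ), (∀ i, i < n → ∑ s : Fin d, B i s * (B i s)ᴴ = 1) →
      ∑ σ : Fin n → Fin d, mpsProd m d B n σ * (mpsProd m d B n σ)ᴴ = 1
  | 0, _ => by
    haveI : Unique (Fin 0 → Fin d) := ⟨⟨Fin.elim0⟩, fun f => funext fun i => i.elim0⟩
    rw [Fintype.sum_unique]
    show (1 : Matrix (Fin (m 0)) (Fin (m 0)) ℂ) * (1 : Matrix (Fin (m 0)) (Fin (m 0)) ℂ)ᴴ = 1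
    simp
  | n + 1, h => by
    let e : ((Fin n → Fin d) × Fin d) ≃ (Fin (n + 1) → Fin d) :=
      { toFun := fun x => Fin.snoc x.1 x.2
        invFun := fun τ => (Fin.init τ, τ (Fin.last n))
        left_inv := fun x => by simp [Fin.init_snoc, Fin.snoc_last]
        right_inv := fun τ => by simp [Fin.snoc_init_self] }
    rw [← e.sum_comp]
    have : ∀ x : (Fin n → Fin d) × Fin d,
        mpsProd m d B (n + 1) (e x) * (mpsProd m d B (n + 1) (e x))ᴴ
          = mpsProd m d B n x.1 * ((B n x.2 * (B n x.2)ᴴ) * (mpsProd m d B n x.1)ᴴ) := by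
      intro x
      have hx : e x = Fin.snoc x.1 x.2 := rfl
      rw [hx, mpsProd_snoc, Matrix.conjTranspose_mul, Matrix.mul_assoc,
        ← Matrix.mul_assoc (B n x.2)]
    rw [Finset.sum_congr rfl fun x _ => this x, Fintype.sum_prod_type]
    have step : ∀ σ : Fin n → Fin d,
        ∑ s : Fin d, mpsProd m d B n σ * ((B n s * (B n s)ᴴ) * (mpsProd m d B n σ)ᴴ)
          = mpsProd m d B n σ * (mpsProd m d B n σ)ᴴ := by
      intro σ
      rw [← Matrix.mul_sum, ← Matrix.sum_mul, h n (Nat.lt_succ_self n), Matrix.one_mul]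
    rw [Finset.sum_congr rfl fun σ _ => step σ]
    exact sum_mpsProd_isometry m d B n (fun i hi => h i (Nat.lt_succ_of_lt hi))

/-- The RQ-sweep: every MPS can be written as a boundary matrix `L` times a
right-canonical MPS with bond dimensions `r i ≤ m i`. -/
lemma mps_claim (d : ℕ) : ∀ (N : ℕ) (m : ℕ → ℕ)
    (A : ∀ i : ℕ, Fin d → Matrix (Fin (m i)) (Fin (m (i + 1))) ℂ),
    ∃ (r : ℕ → ℕ) (B : ∀ i : ℕ, Fin d → Matrix (Fin (r i)) (Fin (r (i + 1))) ℂ)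
      (L : Matrix (Fin (m 0)) (Fin (r 0)) ℂ),
      r N = m N ∧ (∀ i, i ≤ N → r i ≤ m i) ∧
      (∀ i, i < N → ∑ s : Fin d, B i s * (B i s)ᴴ = 1) ∧
      ∀ (τ : ℕ → Fin d) (p : Fin (m 0)) (q : Fin (r N)) (q' : Fin (m N)),
        (q : ℕ) = (q' : ℕ) → Pm m d A N τ p q' = (L * Pm r d B N τ) p q
  | 0, m, A =>
    ⟨m, A, 1, rfl, fun _ _ => le_refl _, fun i hi => absurd hi (Nat.not_lt_zero i),
      fun τ p q q' h => by
        have hq : q = q' := Fin.ext h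
        subst hq
        simp [Pm]⟩
  | N + 1, m, A => by
    obtain ⟨rt, Bt, Lt, hrtN, hrtle, hiso, heq⟩ :=
      mps_claim d N (fun i => m (i + 1)) (fun i => A (i + 1))
    obtain ⟨r0, L, Q, hr0, hQ, hM⟩ := lq_decomp (a := m 0) (β := Fin d × Fin (rt 0))
      (Matrix.of fun p sq => (A 0 sq.1 * Lt) p sq.2)
    refine ⟨fun n => Nat.casesOn n r0 rt,
      fun n => Nat.casesOn n (fun s => Matrix.of fun x y => Q x (s, y)) Bt, L, hrtN, ?_, ?_, ?_⟩
    · intro i hi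
      cases i with
      | zero => exact hr0
      | succ j => exact hrtle j (Nat.succ_le_succ_iff.mp hi)
    · intro i hi
      cases i with
      | zero =>
        ext x y
        have hQe := congrFun (congrFun hQ x) y
        simp only [Matrix.mul_apply, Matrix.conjTranspose_apply, Fintype.sum_prod_type] at hQe ⊢
        simp only [Matrix.sum_apply, Matrix.mul_apply, Matrix.conjTranspose_apply,
          Matrix.of_apply]
        exact hQe
      | succ j => exact hiso j (Nat.succ_lt_succ_iff.mp hi)
    · intro τ p q q' hqq
      have hMe : ∀ (x : Fin (m 0)) (sq : Fin d × Fin (rt 0)),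
          (A 0 sq.1 * Lt) x sq.2 = (L * Q) x sq := by
        intro x sq
        have := congrFun (congrFun hM x) sq
        simpa using this
      have hfac : ∀ s : Fin d,
          A 0 s * Lt = L * (Matrix.of fun x y => Q x (s, y)) := by
        intro s
        ext x y
        rw [show ((A 0 s * Lt) x y = (L * Q) x (s, y)) from hMe x (s, y)]
        simp [Matrix.mul_apply]
      have hpeelB : Pm (fun n => Nat.casesOn n r0 rt) d
          (fun n => Nat.casesOn n (fun s => Matrix.of fun x y => Q x (s, y)) Bt) (N + 1) τ
          = (Matrix.of fun x y => Q x (τ 0, y)) * Pm rt d Bt N (fun i => τ (i + 1)) :=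
        Pm_peel _ d _ N τ
      rw [Pm_peel m d A N τ, hpeelB, ← Matrix.mul_assoc, ← hfac (τ 0), Matrix.mul_assoc]
      rw [Matrix.mul_apply, Matrix.mul_apply]
      refine Finset.sum_congr rfl fun s _ => ?_
      rw [heq (fun i => τ (i + 1)) s q q' hqq]

/-- Right-canonical form: every normalized OBC-MPS with bond dimensions `m i` can be
rewritten with tensors `B_i` of bond dimensions `m' i ≤ m i` satisfying the isometry
conditions `∑_σ B_i^σ (B_i^σ)† = 1`. -/
theorem mps_right_canonical_form (N d : ℕ) (hN : 1 ≤ N) (m : ℕ → ℕ)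
    (hm0 : m 0 = 1) (hmN : m N = 1)
    (A : ∀ i : ℕ, Fin d → Matrix (Fin (m i)) (Fin (m (i + 1))) ℂ)
    (hnorm : ∑ σ : Fin N → Fin d, ‖mpsCoeff m d A N σ‖ ^ 2 = 1) :
    ∃ (m' : ℕ → ℕ) (B : ∀ i : ℕ, Fin d → Matrix (Fin (m' i)) (Fin (m' (i + 1))) ℂ),
      m' 0 = 1 ∧ m' N = 1 ∧ (∀ i, i ≤ N → m' i ≤ m i) ∧
      (∀ i, i < N → ∑ σ : Fin d, B i σ * (B i σ)ᴴ = 1) ∧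
      ∀ σ, mpsCoeff m d A N σ = mpsCoeff m' d B N σ := by
  classical
  rcases Nat.eq_zero_or_pos d with hd | hd
  · subst hd
    haveI : IsEmpty (Fin N → Fin 0) := ⟨fun f => (f ⟨0, hN⟩).elim0⟩
    rw [Finset.univ_eq_empty, Finset.sum_empty] at hnorm
    exact absurd hnorm (by norm_num)
  obtain ⟨r, B, L, hrN, hle, hiso, heqA⟩ := mps_claim d N m A
  set ext : (Fin N → Fin d) → ℕ → Fin d :=
    fun σ i => if h : i < N then σ ⟨i, h⟩ else ⟨0, hd⟩ with hext
  have hbr : ∀ (mm : ℕ → ℕ) (AA : ∀ i : ℕ, Fin d → Matrix (Fin (mm i)) (Fin (mm (i + 1))) ℂ)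
      (σ : Fin N → Fin d), mpsProd mm d AA N σ = Pm mm d AA N (ext σ) :=
    fun mm AA σ => mpsProd_eq_Pm mm d AA N σ (ext σ) (fun i => by simp [ext, i.isLt])
  haveI uM0 : Unique (Fin (m 0)) := by rw [hm0]; infer_instance
  haveI uMN : Unique (Fin (m N)) := by rw [hmN]; infer_instance
  haveI uRN : Unique (Fin (r N)) := by rw [hrN, hmN]; infer_instance
  have hq0 : ((default : Fin (r N)) : ℕ) = ((default : Fin (m N)) : ℕ) := by
    have h1 := (default : Fin (r N)).isLt
    have h2 := (default : Fin (m N)).isLt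
    omega
  have hψ : ∀ σ, mpsCoeff m d A N σ = (L * Pm r d B N (ext σ)) default default := by
    intro σ
    rw [mpsCoeff, hbr m A σ, Fintype.sum_unique, Fintype.sum_unique]
    exact heqA (ext σ) default default default hq0
  have hr0le : r 0 ≤ 1 := hm0 ▸ hle 0 (Nat.zero_le N)
  rcases Nat.le_one_iff_eq_zero_or_eq_one.mp hr0le with h0 | h1
  · -- rank 0 at the boundary contradicts normalization
    exfalso
    haveI : IsEmpty (Fin (r 0)) := ⟨fun i => absurd i.isLt (by omega)⟩
    have hzero : ∀ σ, mpsCoeff m d A N σ = 0 := by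
      intro σ
      rw [hψ σ, Matrix.mul_apply]
      simp
    rw [Finset.sum_congr rfl fun σ _ => by rw [hzero σ]] at hnorm
    simp at hnorm
  · haveI uR0 : Unique (Fin (r 0)) := by rw [h1]; infer_instance
    set c : ℂ := L default default with hc
    have hψc : ∀ σ, mpsCoeff m d A N σ = c * mpsProd r d B N σ default default := by
      intro σ
      rw [hψ σ, Matrix.mul_apply, Fintype.sum_unique, hbr r B σ]
    -- normalization forces |c| = 1
    have hsum := sum_mpsProd_isometry r d B N hiso
    have hsum2 : ∑ σ : Fin N → Fin d,
        mpsProd r d B N σ default default * star (mpsProd r d B N σ default default) = 1 := by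
      have h := congrFun (congrFun hsum default) default
      rw [Matrix.sum_apply] at h
      rw [Finset.sum_congr rfl fun σ _ => by
        rw [Matrix.mul_apply, Fintype.sum_unique, Matrix.conjTranspose_apply]] at h
      rw [h, Matrix.one_apply_eq]
    have hcc : c * star c = 1 := by
      have hnc : (1 : ℂ) = ∑ σ : Fin N → Fin d,
          mpsCoeff m d A N σ * star (mpsCoeff m d A N σ) := by
        have := congrArg (fun x : ℝ => (x : ℂ)) hnorm
        push_cast at this
        rw [← this]
        refine Finset.sum_congr rfl fun σ _ => ?_
        rw [show star (mpsCoeff m d A N σ) = (starRingEnd ℂ) (mpsCoeff m d A N σ) from rfl,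
          Complex.mul_conj, Complex.normSq_eq_norm_sq]
        norm_cast
      rw [Finset.sum_congr rfl fun σ _ => by rw [hψc σ]] at hnc
      have : (1 : ℂ) = (c * star c) * ∑ σ : Fin N → Fin d,
          mpsProd r d B N σ default default * star (mpsProd r d B N σ default default) := by
        rw [hnc, Finset.mul_sum]
        refine Finset.sum_congr rfl fun σ _ => ?_
        simp only [star_mul']
        ring
      rw [hsum2, mul_one] at this
      exact this.symm
    -- rescale the first tensor
    set B' : ∀ i : ℕ, Fin d → Matrix (Fin (r i)) (Fin (r (i + 1))) ℂ :=
      fun n => Nat.casesOn n (fun s => c • B 0 s) (fun j => B (j + 1)) with hB'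
    refine ⟨r, B', h1, hrN.trans hmN, hle, ?_, ?_⟩
    · intro i hi
      cases i with
      | zero =>
        have key : ∀ s : Fin d, (c • B 0 s) * (c • B 0 s)ᴴ
            = (c * star c) • (B 0 s * (B 0 s)ᴴ) := by
          intro s
          rw [Matrix.conjTranspose_smul, Matrix.smul_mul, Matrix.mul_smul, smul_smul]
        show ∑ s : Fin d, (c • B 0 s) * (c • B 0 s)ᴴ = 1
        rw [Finset.sum_congr rfl fun s _ => key s, ← Finset.smul_sum,
          hiso 0 (by omega), hcc, one_smul]
      | succ j => exact hiso (j + 1) hi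
    · intro σ
      obtain ⟨K, rfl⟩ : ∃ K, N = K + 1 := ⟨N - 1, by omega⟩
      have hscale : ∀ (n : ℕ) (σ : Fin (n + 1) → Fin d),
          mpsProd r d B' (n + 1) σ = c • mpsProd r d B (n + 1) σ := by
        intro n
        induction n with
        | zero =>
          intro σ
          show (1 : Matrix (Fin (r 0)) (Fin (r 0)) ℂ) * (c • B 0 (σ (Fin.last 0)))
            = c • ((1 : Matrix (Fin (r 0)) (Fin (r 0)) ℂ) * B 0 (σ (Fin.last 0)))
          rw [Matrix.one_mul, Matrix.one_mul]
        | succ k ih =>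
          intro σ
          show mpsProd r d B' (k + 1) (fun i => σ i.castSucc) * B' (k + 1) (σ (Fin.last (k + 1)))
            = c • (mpsProd r d B (k + 1) (fun i => σ i.castSucc)
                * B (k + 1) (σ (Fin.last (k + 1))))
          rw [ih, Matrix.smul_mul,
            show B' (k + 1) (σ (Fin.last (k + 1))) = B (k + 1) (σ (Fin.last (k + 1))) from rfl]
      rw [hψc σ, mpsCoeff, Fintype.sum_unique, Fintype.sum_unique, hscale K σ]
      rfl
end

section
/- Let A^σ (σ = 1,...,d) be m×m matrices such that the ℓ-site products {A^{σ_1}⋯A^{σ_ℓ} : (σ_1,...,σ_ℓ) ∈ [d]^ℓ} span the full space of m×m complex matrices, and suppose Σ_σ A^σ (A^σ)† = 1. Then the (ℓ+1)-site products {A^{σ_0} A^{σ_1}⋯A^{σ_ℓ} : (σ_0,...,σ_ℓ) ∈ [d]^{ℓ+1}} also span the space of m×m matrices. -/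
open scoped Matrix

/-- If the `ℓ`-site products `A^{σ_1} ⋯ A^{σ_ℓ}` span all `m × m` matrices (injectivity
of the blocked MPS tensor) and `∑_σ A^σ (A^σ)† = 1`, then the `(ℓ+1)`-site products also
span all `m × m` matrices. -/
theorem injectivity_extends (d m ℓ : ℕ) (A : Fin d → Matrix (Fin m) (Fin m) ℂ)
    (hspan : Submodule.span ℂ
        {M : Matrix (Fin m) (Fin m) ℂ |
          ∃ σ : Fin ℓ → Fin d, M = (List.ofFn fun i => A (σ i)).prod} = ⊤)
    (hiso : ∑ σ : Fin d, A σ * (A σ)ᴴ = 1) :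
    Submodule.span ℂ
        {M : Matrix (Fin m) (Fin m) ℂ |
          ∃ σ : Fin (ℓ + 1) → Fin d, M = (List.ofFn fun i => A (σ i)).prod} = ⊤ := by
  set T : Set (Matrix (Fin m) (Fin m) ℂ) :=
    {M | ∃ σ : Fin (ℓ + 1) → Fin d, M = (List.ofFn fun i => A (σ i)).prod}
  set V := Submodule.span ℂ T with hV
  have key : ∀ (σ₀ : Fin d) (M : Matrix (Fin m) (Fin m) ℂ),
      A σ₀ * M ∈ V := by
    intro σ₀ M
    have hM : M ∈ Submodule.span ℂ
        {M : Matrix (Fin m) (Fin m) ℂ |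
          ∃ σ : Fin ℓ → Fin d, M = (List.ofFn fun i => A (σ i)).prod} := by
      rw [hspan]; exact Submodule.mem_top
    induction hM using Submodule.span_induction with
    | mem x hx =>
      obtain ⟨σ, rfl⟩ := hx
      apply Submodule.subset_span
      refine ⟨Fin.cons σ₀ σ, ?_⟩
      rw [List.ofFn_succ]
      simp [Fin.cons]
    | zero => simp
    | add x y _ _ hx hy => rw [Matrix.mul_add]; exact V.add_mem hx hy
    | smul c x _ hx => rw [Matrix.mul_smul]; exact V.smul_mem c hx
  rw [eq_top_iff]
  intro N _
  have hN : N = ∑ σ : Fin d, A σ * ((A σ)ᴴ * N) := by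
    simp_rw [← mul_assoc, ← Finset.sum_mul, hiso, one_mul]
  rw [hN]
  exact V.sum_mem fun σ _ => key σ _
end

section
/- For N ≥ 3 and m ≥ 2, the two-domain state τ = Σ_{n} (e_n ⊗ e_n)^{⊗N} + Σ_{i=1}^{N-1} Σ_{n ≠ n'} (e_n⊗e_n)^{⊗(i-1)} ⊗ (e_n⊗e_{n'}) ⊗ (e_{n'}⊗e_{n'})^{⊗(N-i-1)} ⊗ (e_{n'}⊗e_n) in ((ℂ^m ⊗ ℂ^m))^{⊗N} has the property that for every site j, the reduced density matrix ρ_j = Tr_{[N]∖{j}} |τ⟩⟨τ| has full rank m². -/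
/-- The two-domain state `τ` on `N` sites with local space `ℂ^m ⊗ ℂ^m`:
`τ = ∑_n (e_n⊗e_n)^{⊗N} + ∑_{i=1}^{N-1} ∑_{n≠n'} (e_n⊗e_n)^{⊗(i-1)} ⊗ (e_n⊗e_{n'}) ⊗
(e_{n'}⊗e_{n'})^{⊗(N-i-1)} ⊗ (e_{n'}⊗e_n)` (sites indexed `0,…,N-1`, wall at `i-1`). -/
noncomputable def twoDomain (N m : ℕ) : (Fin N → Fin m × Fin m) → ℂ := fun σ =>
  (∑ n : Fin m, if (∀ j, σ j = (n, n)) then 1 else 0) +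
    ∑ i : Fin (N - 1), ∑ n : Fin m, ∑ n' : Fin m,
      if n' ≠ n ∧ (∀ j : Fin N,
          σ j = (if (j : ℕ) < (i : ℕ) then (n, n)
                 else if (j : ℕ) = (i : ℕ) then (n, n')
                 else if (j : ℕ) < N - 1 then (n', n') else (n', n))) then 1 else 0

/-- The reduced density matrix of the two-domain state at site `j`, obtained by tracing
out all other sites. -/
noncomputable def twoDomainRDM (N m : ℕ) (j : Fin N) :
    Matrix (Fin m × Fin m) (Fin m × Fin m) ℂ :=
  Matrix.of fun s s' =>
    ∑ σB : {k : Fin N // k ≠ j} → Fin m × Fin m,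
      twoDomain N m (fun k => if h : k = j then s else σB ⟨k, h⟩) *
        (starRingEnd ℂ) (twoDomain N m (fun k => if h : k = j then s' else σB ⟨k, h⟩))

/-! ### Auxiliary definitions and lemmas -/

/-- The wall configuration with wall at `i`. -/
def wallCfg (N m : ℕ) (i : Fin (N - 1)) (n n' : Fin m) : Fin N → Fin m × Fin m := fun j =>
  if (j : ℕ) < (i : ℕ) then (n, n)
  else if (j : ℕ) = (i : ℕ) then (n, n')
  else if (j : ℕ) < N - 1 then (n', n') else (n', n)

/-- Natural-number version of the coefficient function `twoDomain`. -/
def tdCount (N m : ℕ) (σ : Fin N → Fin m × Fin m) : ℕ :=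
  (∑ n : Fin m, if (∀ j, σ j = (n, n)) then 1 else 0) +
    ∑ i : Fin (N - 1), ∑ n : Fin m, ∑ n' : Fin m,
      if n' ≠ n ∧ (∀ j : Fin N, σ j = wallCfg N m i n n' j) then 1 else 0

lemma twoDomain_eq_tdCount (N m : ℕ) (σ : Fin N → Fin m × Fin m) :
    twoDomain N m σ = (tdCount N m σ : ℂ) := by
  simp only [twoDomain, tdCount, wallCfg]
  push_cast
  refine congrArg _ (Finset.sum_congr rfl fun i _ => Finset.sum_congr rfl fun n _ => Finset.sum_congr rfl fun n' _ => ?_)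
  split_ifs with hc <;> simp only [hc, if_true, if_false, Nat.cast_one, Nat.cast_zero] <;> simp [hc.1]

/-- Membership in the support of `twoDomain`. -/
def inSupp (N m : ℕ) (σ : Fin N → Fin m × Fin m) : Prop :=
  (∃ n : Fin m, ∀ j, σ j = (n, n)) ∨
    ∃ (i : Fin (N - 1)) (n n' : Fin m), n' ≠ n ∧ ∀ j, σ j = wallCfg N m i n n' j

lemma tdCount_ne_zero_iff (N m : ℕ) (σ : Fin N → Fin m × Fin m) :
    tdCount N m σ ≠ 0 ↔ inSupp N m σ := by
  constructor
  · intro h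
    by_contra hc
    apply h
    rw [inSupp, not_or] at hc
    unfold tdCount
    rw [Nat.add_eq_zero]
    refine ⟨Finset.sum_eq_zero fun n _ => if_neg fun hn => hc.1 ⟨n, hn⟩, ?_⟩
    exact Finset.sum_eq_zero fun i _ => Finset.sum_eq_zero fun n _ =>
      Finset.sum_eq_zero fun n' _ => if_neg fun hh => hc.2 ⟨i, n, n', hh.1, hh.2⟩
  · rintro (⟨n, hn⟩ | ⟨i, n, n', hne, hw⟩) h0
    · unfold tdCount at h0
      rw [Nat.add_eq_zero] at h0
      have := Finset.sum_eq_zero_iff.mp h0.1 n (Finset.mem_univ n)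
      simp [hn] at this
    · unfold tdCount at h0
      rw [Nat.add_eq_zero] at h0
      have h1 := Finset.sum_eq_zero_iff.mp h0.2 i (Finset.mem_univ i)
      have h2 := Finset.sum_eq_zero_iff.mp h1 n (Finset.mem_univ n)
      have h3 := Finset.sum_eq_zero_iff.mp h2 n' (Finset.mem_univ n')
      simp [hne, hw] at h3

lemma wall_apply_wall (N m : ℕ) (i : Fin (N - 1)) (n n' : Fin m) (j : Fin N)
    (h : (j : ℕ) = (i : ℕ)) : wallCfg N m i n n' j = (n, n') := by
  simp [wallCfg, h]

lemma wall_apply_last (N m : ℕ) (i : Fin (N - 1)) (n n' : Fin m) (j : Fin N)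
    (h : (j : ℕ) = N - 1) : wallCfg N m i n n' j = (n', n) := by
  have hi := i.isLt
  have h1 : ¬ ((j : ℕ) < (i : ℕ)) := by omega
  have h2 : ¬ ((j : ℕ) = (i : ℕ)) := by omega
  have h3 : ¬ ((j : ℕ) < N - 1) := by omega
  simp [wallCfg, h1, h2, h3]

lemma wall_apply_diag (N m : ℕ) (i : Fin (N - 1)) (n n' : Fin m) (j : Fin N)
    (h1 : (j : ℕ) ≠ (i : ℕ)) (h2 : (j : ℕ) < N - 1) :
    (wallCfg N m i n n' j).1 = (wallCfg N m i n n' j).2 := by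
  unfold wallCfg
  split_ifs <;> simp_all

lemma wall_offdiag (N m : ℕ) (i : Fin (N - 1)) (n n' : Fin m) (hne : n' ≠ n) (j : Fin N)
    (h : (j : ℕ) = (i : ℕ) ∨ (j : ℕ) = N - 1) :
    (wallCfg N m i n n' j).1 ≠ (wallCfg N m i n n' j).2 := by
  rcases h with h | h
  · rw [wall_apply_wall N m i n n' j h]; exact fun hh => hne hh.symm
  · rw [wall_apply_last N m i n n' j h]; exact hne

/-- From two distinct sites, at least one differs from `j`. -/
lemma pick_ne {N : ℕ} (j k₁ k₂ : Fin N) (hk : k₁ ≠ k₂) : k₁ ≠ j ∨ k₂ ≠ j := by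
  by_contra hc
  push_neg at hc
  exact hk (hc.1.trans hc.2.symm)

/-- A wall configuration and an everywhere-diagonal configuration cannot agree away
from a single site. -/
lemma wall_diag_false (N m : ℕ) (j : Fin N) {τ τ' : Fin N → Fin m × Fin m}
    (hagr : ∀ k, k ≠ j → τ k = τ' k) (i : Fin (N - 1)) (n n' : Fin m) (hne : n' ≠ n)
    (hw : ∀ k, τ' k = wallCfg N m i n n' k) (hdiag : ∀ k, (τ k).1 = (τ k).2) : False := by
  have hi := i.isLt
  have hiN : (i : ℕ) < N := by omega
  have hlN : N - 1 < N := by omega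
  have hne2 : (⟨(i : ℕ), hiN⟩ : Fin N) ≠ ⟨N - 1, hlN⟩ := by
    simp only [ne_eq, Fin.mk.injEq]; omega
  rcases pick_ne j _ _ hne2 with hk | hk
  · have hag := hagr _ hk
    have h2 := wall_offdiag N m i n n' hne ⟨(i : ℕ), hiN⟩ (Or.inl rfl)
    rw [← hw, ← hag] at h2
    exact h2 (hdiag _)
  · have hag := hagr _ hk
    have h2 := wall_offdiag N m i n n' hne ⟨N - 1, hlN⟩ (Or.inr rfl)
    rw [← hw, ← hag] at h2
    exact h2 (hdiag _)

/-- Two support configurations agreeing away from one site are equal. -/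
lemma supp_agree_eq (N m : ℕ) (hN : 3 ≤ N) {σ σ' : Fin N → Fin m × Fin m}
    (hσ : inSupp N m σ) (hσ' : inSupp N m σ') (j : Fin N)
    (h : ∀ k, k ≠ j → σ k = σ' k) : σ = σ' := by
  have h' : ∀ k, k ≠ j → σ' k = σ k := fun k hk => (h k hk).symm
  rcases hσ with ⟨n, hn⟩ | ⟨i₁, n₁, n₂, hne₁, hw₁⟩
  · rcases hσ' with ⟨n'', hn''⟩ | ⟨i₂, m₁, m₂, hne₂, hw₂⟩
    · -- diag / diag
      have h0 : (0 : ℕ) < N := by omega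
      have h1 : (1 : ℕ) < N := by omega
      have hne01 : (⟨0, h0⟩ : Fin N) ≠ ⟨1, h1⟩ := by simp
      have hnn : n = n'' := by
        rcases pick_ne j _ _ hne01 with hk | hk
        · have := h _ hk; rw [hn, hn''] at this; exact (Prod.ext_iff.mp this).1
        · have := h _ hk; rw [hn, hn''] at this; exact (Prod.ext_iff.mp this).1
      funext k; rw [hn, hn'', hnn]
    · -- diag / wall : impossible
      exact absurd (wall_diag_false N m j h i₂ m₁ m₂ hne₂ hw₂
        (fun k => by rw [hn k])) not_false
  · rcases hσ' with ⟨n'', hn''⟩ | ⟨i₂, m₁, m₂, hne₂, hw₂⟩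
    · -- wall / diag : impossible
      exact absurd (wall_diag_false N m j h' i₁ n₁ n₂ hne₁ hw₁
        (fun k => by rw [hn'' k])) not_false
    · -- wall / wall
      have hi₁ := i₁.isLt
      have hi₂ := i₂.isLt
      by_cases hii : (i₁ : ℕ) = (i₂ : ℕ)
      · -- same wall position: parameters must coincide
        have hiN : (i₁ : ℕ) < N := by omega
        have hlN : N - 1 < N := by omega
        have hne2 : (⟨(i₁ : ℕ), hiN⟩ : Fin N) ≠ ⟨N - 1, hlN⟩ := by
          simp only [ne_eq, Fin.mk.injEq]; omega
        have hpar : n₁ = m₁ ∧ n₂ = m₂ := by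
          rcases pick_ne j _ _ hne2 with hk | hk
          · have hag := h _ hk
            rw [hw₁, hw₂, wall_apply_wall N m i₁ n₁ n₂ _ rfl,
              wall_apply_wall N m i₂ m₁ m₂ _ hii] at hag
            exact Prod.ext_iff.mp hag
          · have hag := h _ hk
            rw [hw₁, hw₂, wall_apply_last N m i₁ n₁ n₂ _ rfl,
              wall_apply_last N m i₂ m₁ m₂ _ rfl] at hag
            exact ⟨(Prod.ext_iff.mp hag).2, (Prod.ext_iff.mp hag).1⟩
        have hieq : i₁ = i₂ := Fin.ext hii
        funext k; rw [hw₁, hw₂, hieq, hpar.1, hpar.2]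
      · -- different wall positions: impossible
        exfalso
        have hiN₁ : (i₁ : ℕ) < N := by omega
        have hiN₂ : (i₂ : ℕ) < N := by omega
        have hne2 : (⟨(i₁ : ℕ), hiN₁⟩ : Fin N) ≠ ⟨(i₂ : ℕ), hiN₂⟩ := by
          simp only [ne_eq, Fin.mk.injEq]; omega
        rcases pick_ne j _ _ hne2 with hk | hk
        · -- at site i₁ : σ is off-diagonal, σ' is diagonal
          have hag := h _ hk
          have hod := wall_offdiag N m i₁ n₁ n₂ hne₁ ⟨(i₁ : ℕ), hiN₁⟩ (Or.inl rfl)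
          have hdg := wall_apply_diag N m i₂ m₁ m₂ ⟨(i₁ : ℕ), hiN₁⟩ (by simpa using hii)
            (by simpa using hi₁)
          rw [← hw₁] at hod
          rw [← hw₂] at hdg
          rw [hag] at hod
          exact hod hdg
        · -- at site i₂ : σ' is off-diagonal, σ is diagonal
          have hag := h _ hk
          have hod := wall_offdiag N m i₂ m₁ m₂ hne₂ ⟨(i₂ : ℕ), hiN₂⟩ (Or.inl rfl)
          have hdg := wall_apply_diag N m i₁ n₁ n₂ ⟨(i₂ : ℕ), hiN₂⟩
            (by simpa using fun hh => hii hh.symm) (by simpa using hi₂)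
          rw [← hw₂] at hod
          rw [← hw₁] at hdg
          rw [← hag] at hod
          exact hod hdg

/-- For `N ≥ 3` and `m ≥ 2`, every single-site reduced density matrix of the two-domain
state has full rank `m²`. -/
theorem twoDomain_rdm_full_rank (N m : ℕ) (hN : 3 ≤ N) (hm : 2 ≤ m) (j : Fin N) :
    (twoDomainRDM N m j).rank = m * m := by
  classical
  set ext : (Fin m × Fin m) → ({k : Fin N // k ≠ j} → Fin m × Fin m) →
      (Fin N → Fin m × Fin m) :=
    fun s σB => (fun k => if h : k = j then s else σB ⟨k, h⟩) with hext
  set d : (Fin m × Fin m) → ℕ :=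
    fun s => ∑ σB : {k : Fin N // k ≠ j} → Fin m × Fin m,
      tdCount N m (ext s σB) * tdCount N m (ext s σB) with hd
  have key : twoDomainRDM N m j = Matrix.diagonal (fun s => (d s : ℂ)) := by
    ext s s'
    by_cases hss : s = s'
    · subst hss
      simp only [twoDomainRDM, Matrix.of_apply, Matrix.diagonal_apply_eq, hd]
      push_cast
      refine Finset.sum_congr rfl (fun σB _ => ?_)
      rw [twoDomain_eq_tdCount, map_natCast]
    · simp only [twoDomainRDM, Matrix.of_apply, Matrix.diagonal_apply_ne _ hss]
      refine Finset.sum_eq_zero (fun σB _ => ?_)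
      rw [twoDomain_eq_tdCount, twoDomain_eq_tdCount, map_natCast]
      by_cases h1 : tdCount N m (fun k => if h : k = j then s else σB ⟨k, h⟩) = 0
      · rw [h1]; simp
      by_cases h2 : tdCount N m (fun k => if h : k = j then s' else σB ⟨k, h⟩) = 0
      · rw [h2]; simp
      exfalso
      have hs1 := (tdCount_ne_zero_iff N m _).mp h1
      have hs2 := (tdCount_ne_zero_iff N m _).mp h2
      have heq := supp_agree_eq N m hN hs1 hs2 j (fun k hk => by simp [dif_neg hk])
      have hj := congrFun heq j
      simp at hj
      exact hss hj
  rw [key, Matrix.rank_diagonal]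
  have hall : ∀ s : Fin m × Fin m, (d s : ℂ) ≠ 0 := by
    intro s
    obtain ⟨σ₀, hsupp, hσ₀j⟩ : ∃ σ₀, inSupp N m σ₀ ∧ σ₀ j = s := by
      obtain ⟨n₁, n₂⟩ := s
      by_cases hnn : n₂ = n₁
      · exact ⟨fun _ => (n₁, n₁), Or.inl ⟨n₁, fun _ => rfl⟩, by rw [hnn]⟩
      · by_cases hj : (j : ℕ) < N - 1
        · refine ⟨wallCfg N m ⟨(j : ℕ), hj⟩ n₁ n₂,
            Or.inr ⟨⟨(j : ℕ), hj⟩, n₁, n₂, hnn, fun _ => rfl⟩, ?_⟩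
          exact wall_apply_wall N m _ n₁ n₂ j rfl
        · have hjl : (j : ℕ) = N - 1 := by have := j.isLt; omega
          have h0 : 0 < N - 1 := by omega
          refine ⟨wallCfg N m ⟨0, h0⟩ n₂ n₁,
            Or.inr ⟨⟨0, h0⟩, n₂, n₁, fun hh => hnn hh.symm, fun _ => rfl⟩, ?_⟩
          exact wall_apply_last N m _ n₂ n₁ j hjl
    have hne : tdCount N m σ₀ ≠ 0 := (tdCount_ne_zero_iff N m σ₀).mpr hsupp
    have hterm : ext s (fun k => σ₀ k.1) = σ₀ := by
      funext k
      by_cases h : k = j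
      · subst h; simp [hext, hσ₀j]
      · simp [hext, dif_neg h]
    have hdpos : d s ≠ 0 := by
      rw [hd]
      intro hzero
      rw [Finset.sum_eq_zero_iff] at hzero
      have hz := hzero (fun k => σ₀ k.1) (Finset.mem_univ _)
      rw [hterm] at hz
      rcases Nat.mul_eq_zero.mp hz with h | h <;> exact hne h
    exact_mod_cast hdpos
  have hcard : Fintype.card {i : Fin m × Fin m // (fun s => ((d s : ℂ))) i ≠ 0}
      = Fintype.card (Fin m × Fin m) := by
    apply Fintype.card_of_subtype
    intro x
    simp [hall x]
  rw [hcard]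
  simp [Fintype.card_prod]
end
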